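/- arXiv:2311.08945 — 8 statements merged into one kernel-verified Lean document; each statement's English description precedes it below -/
import Mathlib

section
/- For any r ≥ 0 and any x_1, …, x_n ∈ ℝ^d, one has Σ_{i=1}^n ‖𝒫_r[x_i] − (1/n) Σ_{j=1}^n 𝒫_r[x_j]‖² ≤ Σ_{i=1}^n ‖x_i − (1/n) Σ_{j=1}^n x_j‖², i.e. projecting every point onto the ball of radius r does not increase the sum of squared deviations from the mean. -/
open Finset

/-- The mean minimizes the sum of squared deviations. -/
lemma mean_min_sum_sq {E : Type*} [NormedAddCommGroup E] [InnerProductSpace ℝ E]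
    {n : ℕ} (hn : 0 < n) (y : Fin n → E) (c : E) :
    ∑ i, ‖y i - (n : ℝ)⁻¹ • ∑ j, y j‖ ^ 2 ≤ ∑ i, ‖y i - c‖ ^ 2 := by
  set m : E := (n : ℝ)⁻¹ • ∑ j, y j with hm
  have hnR : (n : ℝ) ≠ 0 := Nat.cast_ne_zero.mpr hn.ne'
  have hnpos : (0:ℝ) < n := Nat.cast_pos.mpr hn
  have hsum : ∑ i, (y i - m) = 0 := by
    rw [Finset.sum_sub_distrib, Finset.sum_const, card_univ, Fintype.card_fin,
      ← Nat.cast_smul_eq_nsmul ℝ, hm, smul_smul, mul_inv_cancel₀ hnR, one_smul, sub_self]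
  have key : ∀ i : Fin n, ‖y i - c‖ ^ 2
      = ‖y i - m‖ ^ 2 + 2 * inner ℝ (y i - m) (m - c) + ‖m - c‖ ^ 2 := by
    intro i
    have : y i - c = (y i - m) + (m - c) := by abel
    rw [this, @norm_add_sq_real]
  calc ∑ i, ‖y i - m‖ ^ 2
      ≤ ∑ i, ‖y i - m‖ ^ 2 + (n : ℝ) * ‖m - c‖ ^ 2 := by
        nlinarith [sq_nonneg ‖m - c‖]
    _ = ∑ i, ‖y i - c‖ ^ 2 := by
        simp only [key]
        rw [Finset.sum_add_distrib, Finset.sum_add_distrib, Finset.sum_const,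
          card_univ, Fintype.card_fin, ← Finset.mul_sum, ← sum_inner, hsum]
        simp [nsmul_eq_mul]

/-- Projection onto a closed ball is nonexpansive. -/
lemma proj_nonexpansive {d : ℕ} (r : ℝ) (hr : 0 ≤ r)
    (P : EuclideanSpace ℝ (Fin d) → EuclideanSpace ℝ (Fin d))
    (hP_mem : ∀ z, P z ∈ Metric.closedBall (0 : EuclideanSpace ℝ (Fin d)) r)
    (hP_min : ∀ z, ∀ w ∈ Metric.closedBall (0 : EuclideanSpace ℝ (Fin d)) r,
      ‖P z - z‖ ≤ ‖w - z‖)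
    (u v : EuclideanSpace ℝ (Fin d)) : ‖P u - P v‖ ≤ ‖u - v‖ := by
  set K := Metric.closedBall (0 : EuclideanSpace ℝ (Fin d)) r with hK
  have hconv : Convex ℝ K := convex_closedBall _ _
  haveI : Nonempty K := ⟨⟨0, by simp [hK, hr]⟩⟩
  have hvar : ∀ z, ∀ w ∈ K, inner ℝ (z - P z) (w - P z) ≤ (0 : ℝ) := by
    intro z
    have heq : ‖z - P z‖ = ⨅ w : K, ‖z - w‖ := by
      apply le_antisymm
      · apply le_ciInf
        intro w
        rw [norm_sub_rev, norm_sub_rev z]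
        exact hP_min z w w.2
      · exact ciInf_le ⟨0, fun b ⟨w, hw⟩ => hw ▸ norm_nonneg _⟩ (⟨P z, hP_mem z⟩ : K)
    exact (norm_eq_iInf_iff_real_inner_le_zero hconv (hP_mem z)).mp heq
  have h1 := hvar u (P v) (hP_mem v)
  have h2 := hvar v (P u) (hP_mem u)
  have hinner : ‖P u - P v‖ ^ 2 ≤ inner ℝ (u - v) (P u - P v) := by
    have expand : (inner ℝ (u - v) (P u - P v) : ℝ) - ‖P u - P v‖ ^ 2
        = inner ℝ (u - P u) (P u - P v) + inner ℝ (v - P v) (P v - P u) := by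
      simp only [← real_inner_self_eq_norm_sq, inner_sub_left, inner_sub_right]
      ring
    have h1' : (0:ℝ) ≤ inner ℝ (u - P u) (P u - P v) := by
      rw [show P v - P u = -(P u - P v) from by abel, inner_neg_right] at h1
      linarith
    have h2' : (0:ℝ) ≤ inner ℝ (v - P v) (P v - P u) := by
      rw [show P u - P v = -(P v - P u) from by abel, inner_neg_right] at h2
      linarith
    linarith [expand]
  have := real_inner_le_norm (u - v) (P u - P v)
  nlinarith [norm_nonneg (P u - P v), norm_nonneg (u - v)]

/-- Projecting every point onto the closed Euclidean ball of radius `r ≥ 0`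
(centered at the origin) does not increase the sum of squared deviations from the mean.
Here `P` is the Euclidean projection onto the ball, characterized as the (unique) minimizer
of the distance to `z` over the ball. -/
theorem sum_sq_dev_mean_proj_le {n d : ℕ} (r : ℝ) (hr : 0 ≤ r)
    (P : EuclideanSpace ℝ (Fin d) → EuclideanSpace ℝ (Fin d))
    (hP_mem : ∀ z, P z ∈ Metric.closedBall (0 : EuclideanSpace ℝ (Fin d)) r)
    (hP_min : ∀ z, ∀ w ∈ Metric.closedBall (0 : EuclideanSpace ℝ (Fin d)) r,
      ‖P z - z‖ ≤ ‖w - z‖)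
    (x : Fin n → EuclideanSpace ℝ (Fin d)) :
    ∑ i, ‖P (x i) - (n : ℝ)⁻¹ • ∑ j, P (x j)‖ ^ 2
      ≤ ∑ i, ‖x i - (n : ℝ)⁻¹ • ∑ j, x j‖ ^ 2 := by
  rcases Nat.eq_zero_or_pos n with hn | hn
  · subst hn; simp
  calc ∑ i, ‖P (x i) - (n : ℝ)⁻¹ • ∑ j, P (x j)‖ ^ 2
      ≤ ∑ i, ‖P (x i) - P ((n : ℝ)⁻¹ • ∑ j, x j)‖ ^ 2 :=
        mean_min_sum_sq hn (fun i => P (x i)) _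
    _ ≤ ∑ i, ‖x i - (n : ℝ)⁻¹ • ∑ j, x j‖ ^ 2 := by
        apply Finset.sum_le_sum
        intro i _
        have h := proj_nonexpansive r hr P hP_mem hP_min (x i) ((n : ℝ)⁻¹ • ∑ j, x j)
        have := norm_nonneg (P (x i) - P ((n : ℝ)⁻¹ • ∑ j, x j))
        nlinarith
end

section
/- Let W = (w_{ij}) ∈ ℝ^{n×n} be a nonnegative, symmetric, doubly stochastic matrix with eigenvalues 1 = λ₁ > λ₂ ≥ ⋯ ≥ λ_n and ρ := max{|λ₂|, |λ_n|} < 1. Let r ≥ 0, η > 0, and let v_1, …, v_n, t_1, …, t_n ∈ ℝ^d with averages v̄ := (1/n)Σ_i v_i and t̄ := (1/n)Σ_i t_i. Define v_i⁺ := 𝒫_r[Σ_{j=1}^n w_{ij}(v_j + η t_j)] and v̄⁺ := (1/n)Σ_i v_i⁺. Then Σ_{i=1}^n ‖v_i⁺ − v̄⁺‖² ≤ ρ Σ_{i=1}^n ‖v_i − v̄‖² + (ρ²η²/(1 − ρ)) Σ_{i=1}^n ‖t_i − t̄‖². -/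
open Matrix

lemma spec_scalar {n : ℕ} (hn : 2 ≤ n)
    (W : Matrix (Fin n) (Fin n) ℝ)
    (hW_rows : ∀ i, ∑ j, W i j = 1)
    (lam : Fin n → ℝ) (P : Matrix (Fin n) (Fin n) ℝ)
    (hP : P * Pᵀ = 1)
    (hdiag : W = P * Matrix.diagonal lam * Pᵀ)
    (hgap : lam ⟨1, Nat.lt_of_lt_of_le Nat.one_lt_two hn⟩ < 1)
    (hmono : Antitone lam)
    (ρ : ℝ)
    (hρdef : ρ = max |lam ⟨1, Nat.lt_of_lt_of_le Nat.one_lt_two hn⟩|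
      |lam ⟨n - 1, Nat.sub_lt (Nat.lt_of_lt_of_le Nat.two_pos hn) Nat.one_pos⟩|)
    (y : Fin n → ℝ) (hy : ∑ i, y i = 0) :
    ∑ i, (W.mulVec y i) ^ 2 ≤ ρ ^ 2 * ∑ i, (y i) ^ 2 := by
  have hP' : Pᵀ * P = 1 := mul_eq_one_comm.mp hP
  -- P preserves dot products
  have hpres : ∀ a : Fin n → ℝ, (P.mulVec a) ⬝ᵥ (P.mulVec a) = a ⬝ᵥ a := by
    intro a
    rw [dotProduct_mulVec, ← Matrix.mulVec_transpose, Matrix.mulVec_mulVec, hP',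
      Matrix.one_mulVec]
  have hPinj : Function.Injective P.mulVec := by
    intro a b h
    have := congrArg Pᵀ.mulVec h
    simpa [Matrix.mulVec_mulVec, hP', Matrix.one_mulVec] using this
  set D := Matrix.diagonal lam with hD
  set one : Fin n → ℝ := fun _ => 1 with hone
  set w : Fin n → ℝ := Pᵀ.mulVec one with hw
  have h1 : P.mulVec w = one := by
    rw [hw, Matrix.mulVec_mulVec, hP, Matrix.one_mulVec]
  have hW1 : W.mulVec one = one := by
    funext i
    simp [Matrix.mulVec, dotProduct, hone, hW_rows i]
  have hDw : D.mulVec w = w := by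
    apply hPinj
    rw [h1, ← hW1]
    conv_rhs => rw [hdiag]
    rw [← Matrix.mulVec_mulVec, ← Matrix.mulVec_mulVec, ← hw]
  -- indices ≥ 1 have |lam| ≤ ρ
  have hlamle : ∀ k : Fin n, k ≠ ⟨0, by omega⟩ → |lam k| ≤ ρ := by
    intro k hk
    have hk1 : (1 : ℕ) ≤ k.val := by
      rcases Nat.eq_zero_or_pos k.val with h0 | h1
      · exact absurd (Fin.ext (by simp [h0])) hk
      · exact h1
    have hle : lam k ≤ lam ⟨1, by omega⟩ := hmono (by simpa [Fin.le_def] using hk1)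
    have hge : lam ⟨n - 1, by omega⟩ ≤ lam k := hmono (by
      have := k.isLt
      simp only [Fin.le_def]
      omega)
    rw [abs_le, hρdef]
    constructor
    · calc -(max |lam ⟨1, by omega⟩| |lam ⟨n - 1, by omega⟩|)
          ≤ -|lam ⟨n - 1, by omega⟩| := by simp
        _ ≤ lam ⟨n - 1, by omega⟩ := neg_abs_le _
        _ ≤ lam k := hge
    · calc lam k ≤ lam ⟨1, by omega⟩ := hle
        _ ≤ |lam ⟨1, by omega⟩| := le_abs_self _
        _ ≤ _ := le_max_left _ _
  have hlamne : ∀ k : Fin n, k ≠ ⟨0, by omega⟩ → lam k ≠ 1 := by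
    intro k hk
    have hk1 : (1 : ℕ) ≤ k.val := by
      rcases Nat.eq_zero_or_pos k.val with h0 | h1
      · exact absurd (Fin.ext (by simp [h0])) hk
      · exact h1
    have hle : lam k ≤ lam ⟨1, by omega⟩ := hmono (by simpa [Fin.le_def] using hk1)
    linarith
  have hwzero : ∀ k : Fin n, k ≠ ⟨0, by omega⟩ → w k = 0 := by
    intro k hk
    have := congrFun hDw k
    rw [hD, Matrix.mulVec_diagonal] at this
    by_contra hwk
    exact hlamne k hk (mul_right_cancel₀ hwk (by linarith [this] )) -- lam k * w k = w k
  -- first column of P is constant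
  have hw0 : w ⟨0, by omega⟩ ≠ 0 := by
    intro h0
    have := congrFun h1 ⟨0, by omega⟩
    rw [Matrix.mulVec, dotProduct] at this
    have hz : ∀ k, P ⟨0, by omega⟩ k * w k = 0 := by
      intro k
      by_cases hk : k = ⟨0, by omega⟩
      · rw [hk, h0, mul_zero]
      · rw [hwzero k hk, mul_zero]
    simp [hz, hone] at this
  have hcol : ∀ i, P i ⟨0, by omega⟩ = (w ⟨0, by omega⟩)⁻¹ := by
    intro i
    have := congrFun h1 i
    rw [Matrix.mulVec, dotProduct] at this
    rw [Finset.sum_eq_single ⟨0, by omega⟩ (fun k _ hk => by rw [hwzero k hk, mul_zero])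
      (by intro h; exact absurd (Finset.mem_univ _) h)] at this
    simp only [hone] at this
    field_simp
    linarith [this]
  set z : Fin n → ℝ := Pᵀ.mulVec y with hz
  have hz0 : z ⟨0, by omega⟩ = 0 := by
    rw [hz, Matrix.mulVec, dotProduct]
    have : ∀ k, Pᵀ ⟨0, by omega⟩ k * y k = (w ⟨0, by omega⟩)⁻¹ * y k := by
      intro k; rw [Matrix.transpose_apply, hcol]
    rw [Finset.sum_congr rfl (fun k _ => this k), ← Finset.mul_sum, hy, mul_zero]
  have hyz : y ⬝ᵥ y = z ⬝ᵥ z := by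
    have : P.mulVec z = y := by
      rw [hz, Matrix.mulVec_mulVec, hP, Matrix.one_mulVec]
    rw [← this, hpres]
  have hWy : W.mulVec y = P.mulVec (D.mulVec z) := by
    rw [hdiag, hz, ← Matrix.mulVec_mulVec, ← Matrix.mulVec_mulVec]
  have key : ∑ i, (W.mulVec y i) ^ 2 = ∑ k, (lam k * z k) ^ 2 := by
    have h2 : (W.mulVec y) ⬝ᵥ (W.mulVec y) = (D.mulVec z) ⬝ᵥ (D.mulVec z) := by
      rw [hWy, hpres]
    simp only [dotProduct] at h2
    calc ∑ i, (W.mulVec y i) ^ 2 = ∑ i, W.mulVec y i * W.mulVec y i := by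
          simp [sq]
      _ = ∑ k, D.mulVec z k * D.mulVec z k := h2
      _ = ∑ k, (lam k * z k) ^ 2 := by
          simp [hD, Matrix.mulVec_diagonal, sq]
  rw [key]
  have hsum : ρ ^ 2 * ∑ i, (y i) ^ 2 = ∑ k, ρ ^ 2 * (z k) ^ 2 := by
    rw [← Finset.mul_sum]
    congr 1
    have := hyz
    simp only [dotProduct] at this
    calc ∑ i, (y i)^2 = ∑ i, y i * y i := by simp [sq]
      _ = ∑ k, z k * z k := this
      _ = ∑ k, (z k)^2 := by simp [sq]
  rw [hsum]
  apply Finset.sum_le_sum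
  intro k _
  by_cases hk : k = ⟨0, by omega⟩
  · rw [hk, hz0]; simp
  · have h := hlamle k hk
    have hρ0 : 0 ≤ ρ := le_trans (abs_nonneg _) h
    have : lam k ^ 2 ≤ ρ ^ 2 := by
      rw [← sq_abs]
      exact pow_le_pow_left₀ (abs_nonneg _) h 2
    calc (lam k * z k)^2 = lam k ^2 * z k ^2 := by ring
      _ ≤ ρ^2 * z k^2 := by nlinarith [sq_nonneg (z k)]

set_option maxHeartbeats 1000000

lemma variance_min {d n : ℕ} (hn : 0 < n) (a : Fin n → EuclideanSpace ℝ (Fin d))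
    (c : EuclideanSpace ℝ (Fin d)) :
    ∑ i, ‖a i - (n : ℝ)⁻¹ • ∑ l, a l‖ ^ 2 ≤ ∑ i, ‖a i - c‖ ^ 2 := by
  set m : EuclideanSpace ℝ (Fin d) := (n : ℝ)⁻¹ • ∑ l, a l with hm
  have hnR : (n : ℝ) ≠ 0 := by positivity
  have hsum : ∑ i, (a i - m) = 0 := by
    rw [Finset.sum_sub_distrib, Finset.sum_const, Finset.card_univ, Fintype.card_fin, hm,
      ← Nat.cast_smul_eq_nsmul ℝ, smul_smul, mul_inv_cancel₀ hnR, one_smul, sub_self]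
  have expand : ∀ i : Fin n, ‖a i - c‖ ^ 2
      = ‖a i - m‖ ^ 2 + 2 * (inner ℝ (a i - m) (m - c) : ℝ) + ‖m - c‖ ^ 2 := by
    intro i
    have h : a i - c = (a i - m) + (m - c) := by abel
    rw [h, norm_add_sq_real]
  calc ∑ i, ‖a i - m‖ ^ 2
      ≤ ∑ i, ‖a i - m‖ ^ 2 + (2 * (inner ℝ (∑ i, (a i - m)) (m - c) : ℝ)
          + (n : ℝ) * ‖m - c‖ ^ 2) := by
        rw [hsum, inner_zero_left]
        have : (0:ℝ) ≤ (n : ℝ) * ‖m - c‖ ^ 2 := by positivity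
        linarith
    _ = ∑ i, ‖a i - c‖ ^ 2 := by
        rw [sum_inner]
        simp only [expand]
        rw [Finset.sum_add_distrib, Finset.sum_add_distrib, Finset.sum_const,
          Finset.card_univ, Fintype.card_fin, ← Finset.mul_sum, nsmul_eq_mul]
        ring

lemma proj_nonexp {d : ℕ} (r : ℝ) (hr : 0 ≤ r)
    (proj : EuclideanSpace ℝ (Fin d) → EuclideanSpace ℝ (Fin d))
    (hproj_mem : ∀ z, proj z ∈ Metric.closedBall (0 : EuclideanSpace ℝ (Fin d)) r)
    (hproj_min : ∀ z, ∀ w ∈ Metric.closedBall (0 : EuclideanSpace ℝ (Fin d)) r,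
      ‖proj z - z‖ ≤ ‖w - z‖)
    (z z' : EuclideanSpace ℝ (Fin d)) : ‖proj z - proj z'‖ ≤ ‖z - z'‖ := by
  set K : Set (EuclideanSpace ℝ (Fin d)) := Metric.closedBall 0 r with hK
  have hKconv : Convex ℝ K := convex_closedBall 0 r
  haveI : Nonempty K := ⟨⟨0, Metric.mem_closedBall_self hr⟩⟩
  have hvar : ∀ u : EuclideanSpace ℝ (Fin d), ∀ w ∈ K,
      (inner ℝ (u - proj u) (w - proj u) : ℝ) ≤ 0 := by
    intro u
    rw [← norm_eq_iInf_iff_real_inner_le_zero hKconv (hproj_mem u)]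
    apply le_antisymm
    · apply le_ciInf
      intro w
      rw [norm_sub_rev, norm_sub_rev u]
      exact hproj_min u w w.2
    · have hbdd : BddBelow (Set.range fun w : K => ‖u - (w : EuclideanSpace ℝ (Fin d))‖) := by
        refine ⟨0, ?_⟩
        rintro s ⟨w, rfl⟩
        exact norm_nonneg _
      exact ciInf_le hbdd ⟨proj u, hproj_mem u⟩
  have h1 : (inner ℝ (z - proj z) (proj z' - proj z) : ℝ) ≤ 0 := hvar z _ (hproj_mem z')
  have h2 : (inner ℝ (z' - proj z') (proj z - proj z') : ℝ) ≤ 0 := hvar z' _ (hproj_mem z)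
  set p := proj z
  set q := proj z'
  have ha : 0 ≤ (inner ℝ (z - p) (p - q) : ℝ) := by
    have hpq : (p - q : EuclideanSpace ℝ (Fin d)) = -(q - p) := by abel
    rw [hpq, inner_neg_right]
    linarith
  have e : (inner ℝ (z - z') (p - q) : ℝ)
      = ‖p - q‖ ^ 2 + (inner ℝ (z - p) (p - q) : ℝ) + -(inner ℝ (z' - q) (p - q) : ℝ) := by
    rw [← real_inner_self_eq_norm_sq]
    have hzz : (z - z' : EuclideanSpace ℝ (Fin d)) = (p - q) + (z - p) + -(z' - q) := by abel
    rw [hzz, inner_add_left, inner_add_left, inner_neg_left]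
  have key : ‖p - q‖ ^ 2 ≤ (inner ℝ (z - z') (p - q) : ℝ) := by linarith
  have hcs : (inner ℝ (z - z') (p - q) : ℝ) ≤ ‖z - z'‖ * ‖p - q‖ := real_inner_le_norm _ _
  nlinarith [norm_nonneg (p - q), norm_nonneg (z - z'), sq_nonneg (‖p - q‖ - ‖z - z'‖)]

lemma spec_vec {n d : ℕ} (hn : 2 ≤ n)
    (W : Matrix (Fin n) (Fin n) ℝ)
    (hW_rows : ∀ i, ∑ j, W i j = 1)
    (lam : Fin n → ℝ) (P : Matrix (Fin n) (Fin n) ℝ)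
    (hP : P * Pᵀ = 1)
    (hdiag : W = P * Matrix.diagonal lam * Pᵀ)
    (hgap : lam ⟨1, Nat.lt_of_lt_of_le Nat.one_lt_two hn⟩ < 1)
    (hmono : Antitone lam)
    (ρ : ℝ)
    (hρdef : ρ = max |lam ⟨1, Nat.lt_of_lt_of_le Nat.one_lt_two hn⟩|
      |lam ⟨n - 1, Nat.sub_lt (Nat.lt_of_lt_of_le Nat.two_pos hn) Nat.one_pos⟩|)
    (g : Fin n → EuclideanSpace ℝ (Fin d)) (hg : ∑ j, g j = 0) :
    ∑ i, ‖∑ j, W i j • g j‖ ^ 2 ≤ ρ ^ 2 * ∑ j, ‖g j‖ ^ 2 := by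
  have hnormsq : ∀ x : EuclideanSpace ℝ (Fin d), ‖x‖ ^ 2 = ∑ k, (x k) ^ 2 := by
    intro x
    rw [EuclideanSpace.norm_eq, Real.sq_sqrt (by positivity)]
    simp [Real.norm_eq_abs, sq_abs]
  have happ : ∀ (i : Fin n) (k : Fin d), (∑ j, W i j • g j) k = W.mulVec (fun j => g j k) i := by
    intro i k
    rw [Matrix.mulVec, dotProduct]
    rw [WithLp.ofLp_sum, Finset.sum_apply]
    simp [PiLp.smul_apply, smul_eq_mul]
  calc ∑ i, ‖∑ j, W i j • g j‖ ^ 2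
      = ∑ i, ∑ k, (W.mulVec (fun j => g j k) i) ^ 2 := by
        refine Finset.sum_congr rfl fun i _ => ?_
        rw [hnormsq]
        exact Finset.sum_congr rfl fun k _ => by rw [happ]
    _ = ∑ k, ∑ i, (W.mulVec (fun j => g j k) i) ^ 2 := Finset.sum_comm
    _ ≤ ∑ k : Fin d, ρ ^ 2 * ∑ j, (g j k) ^ 2 := by
        refine Finset.sum_le_sum fun k _ => ?_
        refine spec_scalar hn W hW_rows lam P hP hdiag hgap hmono ρ hρdef _ ?_
        have := congrFun (congrArg WithLp.ofLp hg) k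
        rw [WithLp.ofLp_sum, Finset.sum_apply] at this
        simpa using this
    _ = ρ ^ 2 * ∑ j, ‖g j‖ ^ 2 := by
        simp only [hnormsq, Finset.mul_sum]
        exact Finset.sum_comm

theorem consensus_error_proj_update {n d : ℕ} (hn : 2 ≤ n)
    (W : Matrix (Fin n) (Fin n) ℝ)
    (hW_nonneg : ∀ i j, 0 ≤ W i j)
    (hW_symm : W.IsSymm)
    (hW_rows : ∀ i, ∑ j, W i j = 1)
    (hW_cols : ∀ j, ∑ i, W i j = 1)
    (lam : Fin n → ℝ) (P : Matrix (Fin n) (Fin n) ℝ)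
    (hP : P * Pᵀ = 1)
    (hdiag : W = P * Matrix.diagonal lam * Pᵀ)
    (hlam0 : lam ⟨0, by omega⟩ = 1)
    (hgap : lam ⟨1, by omega⟩ < 1)
    (hmono : Antitone lam)
    (ρ : ℝ)
    (hρdef : ρ = max |lam ⟨1, by omega⟩| |lam ⟨n - 1, by omega⟩|)
    (hρlt : ρ < 1)
    (r : ℝ) (hr : 0 ≤ r) (η : ℝ) (hη : 0 < η)
    -- the Euclidean projection onto the closed ball of radius `r` centered at the origin
    (proj : EuclideanSpace ℝ (Fin d) → EuclideanSpace ℝ (Fin d))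
    (hproj_mem : ∀ z, proj z ∈ Metric.closedBall (0 : EuclideanSpace ℝ (Fin d)) r)
    (hproj_min : ∀ z, ∀ w ∈ Metric.closedBall (0 : EuclideanSpace ℝ (Fin d)) r,
      ‖proj z - z‖ ≤ ‖w - z‖)
    (v t : Fin n → EuclideanSpace ℝ (Fin d))
    (vplus : Fin n → EuclideanSpace ℝ (Fin d))
    (hvplus : ∀ i, vplus i = proj (∑ j, W i j • (v j + η • t j))) :
    ∑ i, ‖vplus i - (n : ℝ)⁻¹ • ∑ l, vplus l‖ ^ 2
      ≤ ρ * ∑ i, ‖v i - (n : ℝ)⁻¹ • ∑ l, v l‖ ^ 2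
        + ρ ^ 2 * η ^ 2 / (1 - ρ) * ∑ i, ‖t i - (n : ℝ)⁻¹ • ∑ l, t l‖ ^ 2 := by
  have hρ0 : 0 ≤ ρ := hρdef ▸ le_trans (abs_nonneg _) (le_max_left _ _)
  have hnR : ((n : ℝ)) ≠ 0 := by
    have : (0:ℕ) < n := by omega
    positivity
  set x : Fin n → EuclideanSpace ℝ (Fin d) := fun j => v j + η • t j with hx
  set xbar : EuclideanSpace ℝ (Fin d) := (n : ℝ)⁻¹ • ∑ l, x l with hxbar
  set vbar : EuclideanSpace ℝ (Fin d) := (n : ℝ)⁻¹ • ∑ l, v l with hvbar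
  set tbar : EuclideanSpace ℝ (Fin d) := (n : ℝ)⁻¹ • ∑ l, t l with htbar
  have step1 : ∑ i, ‖vplus i - (n : ℝ)⁻¹ • ∑ l, vplus l‖ ^ 2
      ≤ ∑ i, ‖vplus i - proj xbar‖ ^ 2 := variance_min (by omega) vplus (proj xbar)
  have step2 : ∀ i, ‖vplus i - proj xbar‖ ^ 2 ≤ ‖(∑ j, W i j • x j) - xbar‖ ^ 2 := by
    intro i
    rw [hvplus i]
    exact pow_le_pow_left₀ (norm_nonneg _)
      (proj_nonexp r hr proj hproj_mem hproj_min (∑ j, W i j • x j) xbar) 2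
  have hcenter : ∀ i, (∑ j, W i j • x j) - xbar = ∑ j, W i j • (x j - xbar) := by
    intro i
    rw [Finset.sum_congr rfl (fun j _ => smul_sub (W i j) (x j) xbar),
      Finset.sum_sub_distrib, ← Finset.sum_smul, hW_rows i, one_smul]
  have hgsum : ∑ j, (x j - xbar) = 0 := by
    rw [Finset.sum_sub_distrib, Finset.sum_const, Finset.card_univ, Fintype.card_fin, hxbar,
      ← Nat.cast_smul_eq_nsmul ℝ, smul_smul, mul_inv_cancel₀ hnR, one_smul, sub_self]
  have step3 : ∑ i, ‖∑ j, W i j • (x j - xbar)‖ ^ 2 ≤ ρ ^ 2 * ∑ j, ‖x j - xbar‖ ^ 2 :=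
    spec_vec hn W hW_rows lam P hP hdiag hgap hmono ρ hρdef _ hgsum
  have hxbar_split : xbar = vbar + η • tbar := by
    rw [hxbar, hvbar, htbar, hx]
    rw [Finset.sum_add_distrib, smul_add]
    congr 1
    rw [← Finset.smul_sum, smul_comm]
  have hdecomp : ∀ j, x j - xbar = (v j - vbar) + η • (t j - tbar) := by
    intro j
    rw [hxbar_split, hx]
    simp only [smul_sub]
    abel
  have h1ρ : 0 < 1 - ρ := by linarith
  have step4 : ∀ j, ρ ^ 2 * ‖x j - xbar‖ ^ 2
      ≤ ρ * ‖v j - vbar‖ ^ 2 + ρ ^ 2 * η ^ 2 / (1 - ρ) * ‖t j - tbar‖ ^ 2 := by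
    intro j
    have hnorm : ‖x j - xbar‖ ≤ ‖v j - vbar‖ + η * ‖t j - tbar‖ := by
      rw [hdecomp j]
      refine le_trans (norm_add_le _ _) ?_
      rw [norm_smul, Real.norm_eq_abs, abs_of_pos hη]
    set A := ‖v j - vbar‖ with hA'
    set B := ‖t j - tbar‖ with hB'
    have hA : 0 ≤ A := norm_nonneg _
    have hB : 0 ≤ B := norm_nonneg _
    have hx2 : ‖x j - xbar‖ ^ 2 ≤ (A + η * B) ^ 2 :=
      pow_le_pow_left₀ (norm_nonneg _) hnorm 2
    have hx3 : ρ ^ 2 * ‖x j - xbar‖ ^ 2 ≤ ρ ^ 2 * (A + η * B) ^ 2 :=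
      mul_le_mul_of_nonneg_left hx2 (sq_nonneg ρ)
    have hc : ρ ^ 2 * η ^ 2 / (1 - ρ) * (1 - ρ) = ρ ^ 2 * η ^ 2 :=
      div_mul_cancel₀ _ (ne_of_gt h1ρ)
    nlinarith [hx3, mul_nonneg hρ0 (sq_nonneg ((1 - ρ) * A - ρ * (η * B))), hc, h1ρ, hρ0,
      mul_nonneg hA (mul_nonneg hη.le hB)]
  calc ∑ i, ‖vplus i - (n : ℝ)⁻¹ • ∑ l, vplus l‖ ^ 2
      ≤ ∑ i, ‖vplus i - proj xbar‖ ^ 2 := step1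
    _ ≤ ∑ i, ‖(∑ j, W i j • x j) - xbar‖ ^ 2 := Finset.sum_le_sum fun i _ => step2 i
    _ = ∑ i, ‖∑ j, W i j • (x j - xbar)‖ ^ 2 := by
        refine Finset.sum_congr rfl fun i _ => ?_
        rw [hcenter i]
    _ ≤ ρ ^ 2 * ∑ j, ‖x j - xbar‖ ^ 2 := step3
    _ = ∑ j, ρ ^ 2 * ‖x j - xbar‖ ^ 2 := Finset.mul_sum _ _ _
    _ ≤ ∑ j, (ρ * ‖v j - vbar‖ ^ 2 + ρ ^ 2 * η ^ 2 / (1 - ρ) * ‖t j - tbar‖ ^ 2) :=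
        Finset.sum_le_sum fun j _ => step4 j
    _ = ρ * ∑ i, ‖v i - vbar‖ ^ 2 + ρ ^ 2 * η ^ 2 / (1 - ρ) * ∑ i, ‖t i - tbar‖ ^ 2 := by
        rw [Finset.sum_add_distrib, ← Finset.mul_sum, ← Finset.mul_sum]
end

section
/- For each i = 1, …, n, let F_i, f_i : ℝ^p × ℝ^q → ℝ be such that ∇F_i is L_{F,1}-Lipschitz, f_i is twice differentiable, and ∇²f_i is L_{f,2}-Lipschitz, while ∇f_i is L_{f,1}-Lipschitz. Let r_v ≥ 0 and let (x_i, y_i, v_i) and (x_i', y_i', v_i') with ‖v_i‖ ≤ r_v for all i. Define d_{x,i} := ∇₁F_i(x_i, y_i) − ∇²₁₂f_i(x_i, y_i) v_i and d_{x,i}' := ∇₁F_i(x_i', y_i') − ∇²₁₂f_i(x_i', y_i') v_i'. Then Σ_{i=1}^n ‖d_{x,i} − d_{x,i}'‖² ≤ C₁ Σ_{i=1}^n (‖x_i − x_i'‖² + ‖y_i − y_i'‖² + ‖v_i − v_i'‖²), where C₁ := 3 max{(L_{F,1} + r_v L_{f,2})², L_{f,1}²}. -/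
noncomputable section

/-- `Vec d` is the Euclidean space `ℝ^d`. -/
abbrev Vec (d : ℕ) : Type := EuclideanSpace ℝ (Fin d)

lemma sq_bound_aux (D M L a t mx : ℝ) (hD0 : 0 ≤ D)
    (h1 : M ^ 2 ≤ mx) (h2 : L ^ 2 ≤ mx)
    (htri : D ≤ M * a + L * t) : D ^ 2 ≤ 3 * mx * (a ^ 2 + t ^ 2) := by
  have hmx0 : 0 ≤ mx := le_trans (sq_nonneg _) h1
  have hA : D ^ 2 ≤ (M * a + L * t) ^ 2 := by nlinarith
  nlinarith [sq_nonneg (M * a - L * t), mul_nonneg hmx0 (sq_nonneg a),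
    mul_nonneg hmx0 (sq_nonneg t),
    mul_le_mul_of_nonneg_right h1 (sq_nonneg a),
    mul_le_mul_of_nonneg_right h2 (sq_nonneg t)]

/-- Lipschitz-type bound for the differences of the directions
`d_{x,i} = ∇₁Fᵢ(xᵢ, yᵢ) − ∇²₁₂fᵢ(xᵢ, yᵢ) vᵢ`: if each `∇Fᵢ` is `L_{F,1}`-Lipschitz, each
`fᵢ` is twice differentiable with `L_{f,1}`-Lipschitz gradient and `L_{f,2}`-Lipschitz
second derivative, and `‖vᵢ‖ ≤ r_v`, then
`∑ ‖d_{x,i} − d_{x,i}'‖² ≤ C₁ ∑ (‖xᵢ−xᵢ'‖² + ‖yᵢ−yᵢ'‖² + ‖vᵢ−vᵢ'‖²)` with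
`C₁ = 3 max{(L_{F,1} + r_v L_{f,2})², L_{f,1}²}`.
Here `gF1 i, gF2 i` (resp. `g1 i, g2 i`) are the partial gradients of `F i` (resp. `f i`),
and `f12 i x y : H →L[ℝ] E` is the Jacobian of `∇₁fᵢ` with respect to `y`. -/
theorem sum_sq_dx_diff_le {n p q : ℕ}
    (LF1 Lf1 Lf2 rv : ℝ)
    (hLF1 : 0 ≤ LF1) (hLf1 : 0 ≤ Lf1) (hLf2 : 0 ≤ Lf2) (hrv : 0 ≤ rv)
    (F f : Fin n → Vec p → Vec q → ℝ)
    (gF1 : Fin n → Vec p → Vec q → Vec p) (gF2 : Fin n → Vec p → Vec q → Vec q)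
    (g1 : Fin n → Vec p → Vec q → Vec p) (g2 : Fin n → Vec p → Vec q → Vec q)
    (f12 : Fin n → Vec p → Vec q → (Vec q →L[ℝ] Vec p))
    (f22 : Fin n → Vec p → Vec q → (Vec q →L[ℝ] Vec q))
    -- `gF1, gF2` are the partial gradients of `F`
    (hgF1 : ∀ i x y, HasGradientAt (fun x' => F i x' y) (gF1 i x y) x)
    (hgF2 : ∀ i x y, HasGradientAt (fun y' => F i x y') (gF2 i x y) y)
    -- `g1, g2` are the partial gradients of `f`
    (hg1 : ∀ i x y, HasGradientAt (fun x' => f i x' y) (g1 i x y) x)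
    (hg2 : ∀ i x y, HasGradientAt (fun y' => f i x y') (g2 i x y) y)
    -- `f12 i x y` is the Jacobian of `∇₁fᵢ` w.r.t. `y`, and `f22 i x y` the Hessian w.r.t. `y`
    (hf12 : ∀ i x y, HasFDerivAt (fun y' => g1 i x y') (f12 i x y) y)
    (hf22 : ∀ i x y, HasFDerivAt (fun y' => g2 i x y') (f22 i x y) y)
    -- `∇Fᵢ` is `L_{F,1}`-Lipschitz (w.r.t. the Euclidean norm on the product)
    (hgFlip : ∀ i x y x' y',
      ‖gF1 i x y - gF1 i x' y'‖ ^ 2 + ‖gF2 i x y - gF2 i x' y'‖ ^ 2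
        ≤ LF1 ^ 2 * (‖x - x'‖ ^ 2 + ‖y - y'‖ ^ 2))
    -- `∇fᵢ` is `L_{f,1}`-Lipschitz
    (hglip : ∀ i x y x' y',
      ‖g1 i x y - g1 i x' y'‖ ^ 2 + ‖g2 i x y - g2 i x' y'‖ ^ 2
        ≤ Lf1 ^ 2 * (‖x - x'‖ ^ 2 + ‖y - y'‖ ^ 2))
    -- `∇²fᵢ` is `L_{f,2}`-Lipschitz
    (hf12lip : ∀ i x y x' y',
      ‖f12 i x y - f12 i x' y'‖ ≤ Lf2 * Real.sqrt (‖x - x'‖ ^ 2 + ‖y - y'‖ ^ 2))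
    (hf22lip : ∀ i x y x' y',
      ‖f22 i x y - f22 i x' y'‖ ≤ Lf2 * Real.sqrt (‖x - x'‖ ^ 2 + ‖y - y'‖ ^ 2))
    (X X' : Fin n → Vec p) (Y Y' V V' : Fin n → Vec q)
    (hV : ∀ i, ‖V i‖ ≤ rv) :
    ∑ i, ‖(gF1 i (X i) (Y i) - (f12 i (X i) (Y i)) (V i))
          - (gF1 i (X' i) (Y' i) - (f12 i (X' i) (Y' i)) (V' i))‖ ^ 2
      ≤ 3 * max ((LF1 + rv * Lf2) ^ 2) (Lf1 ^ 2)
          * ∑ i, (‖X i - X' i‖ ^ 2 + ‖Y i - Y' i‖ ^ 2 + ‖V i - V' i‖ ^ 2) := by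
  set C : ℝ := 3 * max ((LF1 + rv * Lf2) ^ 2) (Lf1 ^ 2) with hCdef
  have key : ∀ i : Fin n,
      ‖(gF1 i (X i) (Y i) - (f12 i (X i) (Y i)) (V i))
          - (gF1 i (X' i) (Y' i) - (f12 i (X' i) (Y' i)) (V' i))‖ ^ 2
        ≤ C * (‖X i - X' i‖ ^ 2 + ‖Y i - Y' i‖ ^ 2 + ‖V i - V' i‖ ^ 2) := by
    intro i
    have hs : (0:ℝ) ≤ ‖X i - X' i‖ ^ 2 + ‖Y i - Y' i‖ ^ 2 := by positivity
    set a : ℝ := Real.sqrt (‖X i - X' i‖ ^ 2 + ‖Y i - Y' i‖ ^ 2) with ha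
    have ha0 : 0 ≤ a := Real.sqrt_nonneg _
    have hasq : a ^ 2 = ‖X i - X' i‖ ^ 2 + ‖Y i - Y' i‖ ^ 2 := Real.sq_sqrt hs
    -- operator norm of `f12` is at most `Lf1`
    have hlipg1 : LipschitzWith (NNReal.mk Lf1 hLf1) (fun y' => g1 i (X' i) y') := by
      apply LipschitzWith.of_dist_le_mul
      intro y y'
      have h := hglip i (X' i) y (X' i) y'
      simp only [sub_self, norm_zero] at h
      have h2 : ‖g1 i (X' i) y - g1 i (X' i) y'‖ ^ 2 ≤ Lf1 ^ 2 * ‖y - y'‖ ^ 2 := by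
        nlinarith [sq_nonneg ‖g2 i (X' i) y - g2 i (X' i) y'‖]
      have hn1 : (0:ℝ) ≤ ‖g1 i (X' i) y - g1 i (X' i) y'‖ := norm_nonneg _
      have hn2 : (0:ℝ) ≤ Lf1 * ‖y - y'‖ := by positivity
      rw [dist_eq_norm, dist_eq_norm, NNReal.coe_mk]
      nlinarith [h2]
    have h12norm : ‖f12 i (X' i) (Y' i)‖ ≤ Lf1 := by
      have := (hf12 i (X' i) (Y' i)).le_of_lipschitz hlipg1
      simpa using this
    -- decomposition
    have hid : (gF1 i (X i) (Y i) - (f12 i (X i) (Y i)) (V i))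
          - (gF1 i (X' i) (Y' i) - (f12 i (X' i) (Y' i)) (V' i))
        = (gF1 i (X i) (Y i) - gF1 i (X' i) (Y' i))
          - (f12 i (X i) (Y i) - f12 i (X' i) (Y' i)) (V i)
          - (f12 i (X' i) (Y' i)) (V i - V' i) := by
      simp only [ContinuousLinearMap.sub_apply, map_sub]
      abel
    -- bound each piece
    have hA : ‖gF1 i (X i) (Y i) - gF1 i (X' i) (Y' i)‖ ≤ LF1 * a := by
      have h := hgFlip i (X i) (Y i) (X' i) (Y' i)
      have hn : (0:ℝ) ≤ ‖gF1 i (X i) (Y i) - gF1 i (X' i) (Y' i)‖ := norm_nonneg _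
      have hMa : (0:ℝ) ≤ LF1 * a := by positivity
      nlinarith [sq_nonneg ‖gF2 i (X i) (Y i) - gF2 i (X' i) (Y' i)‖]
    have hB : ‖(f12 i (X i) (Y i) - f12 i (X' i) (Y' i)) (V i)‖ ≤ Lf2 * a * rv := by
      calc ‖(f12 i (X i) (Y i) - f12 i (X' i) (Y' i)) (V i)‖
          ≤ ‖f12 i (X i) (Y i) - f12 i (X' i) (Y' i)‖ * ‖V i‖ :=
            ContinuousLinearMap.le_opNorm _ _
        _ ≤ (Lf2 * a) * rv := by
            apply mul_le_mul (hf12lip i (X i) (Y i) (X' i) (Y' i)) (hV i)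
              (norm_nonneg _) (by positivity)
    have hD : ‖(f12 i (X' i) (Y' i)) (V i - V' i)‖ ≤ Lf1 * ‖V i - V' i‖ := by
      calc ‖(f12 i (X' i) (Y' i)) (V i - V' i)‖
          ≤ ‖f12 i (X' i) (Y' i)‖ * ‖V i - V' i‖ := ContinuousLinearMap.le_opNorm _ _
        _ ≤ Lf1 * ‖V i - V' i‖ := by
            exact mul_le_mul_of_nonneg_right h12norm (norm_nonneg _)
    have htri : ‖(gF1 i (X i) (Y i) - (f12 i (X i) (Y i)) (V i))
          - (gF1 i (X' i) (Y' i) - (f12 i (X' i) (Y' i)) (V' i))‖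
        ≤ (LF1 + rv * Lf2) * a + Lf1 * ‖V i - V' i‖ := by
      rw [hid]
      calc ‖(gF1 i (X i) (Y i) - gF1 i (X' i) (Y' i))
          - (f12 i (X i) (Y i) - f12 i (X' i) (Y' i)) (V i)
          - (f12 i (X' i) (Y' i)) (V i - V' i)‖
          ≤ ‖(gF1 i (X i) (Y i) - gF1 i (X' i) (Y' i))
          - (f12 i (X i) (Y i) - f12 i (X' i) (Y' i)) (V i)‖
            + ‖(f12 i (X' i) (Y' i)) (V i - V' i)‖ := norm_sub_le _ _
        _ ≤ (‖gF1 i (X i) (Y i) - gF1 i (X' i) (Y' i)‖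
            + ‖(f12 i (X i) (Y i) - f12 i (X' i) (Y' i)) (V i)‖)
            + ‖(f12 i (X' i) (Y' i)) (V i - V' i)‖ := by
            gcongr
            exact norm_sub_le _ _
        _ ≤ (LF1 * a + Lf2 * a * rv) + Lf1 * ‖V i - V' i‖ := by
            gcongr
        _ = (LF1 + rv * Lf2) * a + Lf1 * ‖V i - V' i‖ := by ring
    -- conclude by squaring
    have hmx1 : (LF1 + rv * Lf2) ^ 2 ≤ max ((LF1 + rv * Lf2) ^ 2) (Lf1 ^ 2) :=
      le_max_left _ _
    have hmx2 : Lf1 ^ 2 ≤ max ((LF1 + rv * Lf2) ^ 2) (Lf1 ^ 2) := le_max_right _ _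
    have hfin := sq_bound_aux _ _ _ _ _ _ (norm_nonneg _) hmx1 hmx2 htri
    calc ‖(gF1 i (X i) (Y i) - (f12 i (X i) (Y i)) (V i))
          - (gF1 i (X' i) (Y' i) - (f12 i (X' i) (Y' i)) (V' i))‖ ^ 2
        ≤ 3 * max ((LF1 + rv * Lf2) ^ 2) (Lf1 ^ 2) * (a ^ 2 + ‖V i - V' i‖ ^ 2) := hfin
      _ = C * (‖X i - X' i‖ ^ 2 + ‖Y i - Y' i‖ ^ 2 + ‖V i - V' i‖ ^ 2) := by
          rw [hasq, hCdef]; try ring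
  calc ∑ i, ‖(gF1 i (X i) (Y i) - (f12 i (X i) (Y i)) (V i))
          - (gF1 i (X' i) (Y' i) - (f12 i (X' i) (Y' i)) (V' i))‖ ^ 2
      ≤ ∑ i, C * (‖X i - X' i‖ ^ 2 + ‖Y i - Y' i‖ ^ 2 + ‖V i - V' i‖ ^ 2) :=
        Finset.sum_le_sum fun i _ => key i
    _ = C * ∑ i, (‖X i - X' i‖ ^ 2 + ‖Y i - Y' i‖ ^ 2 + ‖V i - V' i‖ ^ 2) :=
        (Finset.mul_sum _ _ _).symm
end
end

section
/- For each i = 1, …, n, let f_i : ℝ^p × ℝ^q → ℝ have L_{f,1}-Lipschitz gradient, set f := (1/n)Σ_{i=1}^n f_i, and let y* ∈ ℝ^q and x̄ ∈ ℝ^p satisfy ∇₂f(x̄, y*) = 0. Let (x_1, y_1), …, (x_n, y_n) be points with averages x̄ = (1/n)Σ_i x_i and ȳ := (1/n)Σ_i y_i, and set d̄_y := (1/n)Σ_{i=1}^n ∇₂f_i(x_i, y_i). Then ‖d̄_y‖² ≤ (2L_{f,1}²/n) Σ_{i=1}^n (‖x_i − x̄‖² + ‖y_i − ȳ‖²) +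 2L_{f,1}² ‖ȳ − y*‖². -/
noncomputable section

set_option maxHeartbeats 1000000 in
/-- Bound on the average lower-level direction
`d̄_y = (1/n) ∑ᵢ ∇₂fᵢ(xᵢ, yᵢ)`: if each `fᵢ` has `L_{f,1}`-Lipschitz gradient,
`f = (1/n) ∑ fᵢ` and `∇₂f(x̄, y*) = 0`, then
`‖d̄_y‖² ≤ (2L_{f,1}²/n) ∑ᵢ (‖xᵢ − x̄‖² + ‖yᵢ − ȳ‖²) + 2L_{f,1}² ‖ȳ − y*‖²`.
Here `g1 i, g2 i` are the partial gradients of `f i`. -/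
theorem sq_norm_dybar_le {n p q : ℕ} (hn : 0 < n)
    (Lf1 : ℝ) (hLf1 : 0 ≤ Lf1)
    (f : Fin n → Vec p → Vec q → ℝ)
    (g1 : Fin n → Vec p → Vec q → Vec p) (g2 : Fin n → Vec p → Vec q → Vec q)
    -- `g1, g2` are the partial gradients of `f i`
    (hg1 : ∀ i x y, HasGradientAt (fun x' => f i x' y) (g1 i x y) x)
    (hg2 : ∀ i x y, HasGradientAt (fun y' => f i x y') (g2 i x y) y)
    -- `∇fᵢ` is `L_{f,1}`-Lipschitz (w.r.t. the Euclidean norm on the product)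
    (hglip : ∀ i x y x' y',
      ‖g1 i x y - g1 i x' y'‖ ^ 2 + ‖g2 i x y - g2 i x' y'‖ ^ 2
        ≤ Lf1 ^ 2 * (‖x - x'‖ ^ 2 + ‖y - y'‖ ^ 2))
    (X : Fin n → Vec p) (Y : Fin n → Vec q)
    (xbar : Vec p) (hxbar : xbar = (n : ℝ)⁻¹ • ∑ i, X i)
    (ybar : Vec q) (hybar : ybar = (n : ℝ)⁻¹ • ∑ i, Y i)
    -- `y*` satisfies `∇₂f(x̄, y*) = 0`, where `f = (1/n) ∑ᵢ fᵢ`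
    (ystar : Vec q) (hystar : (n : ℝ)⁻¹ • ∑ i, g2 i xbar ystar = 0) :
    ‖(n : ℝ)⁻¹ • ∑ i, g2 i (X i) (Y i)‖ ^ 2
      ≤ 2 * Lf1 ^ 2 / n * ∑ i, (‖X i - xbar‖ ^ 2 + ‖Y i - ybar‖ ^ 2)
        + 2 * Lf1 ^ 2 * ‖ybar - ystar‖ ^ 2 := by
  have hn' : (0:ℝ) < n := by exact_mod_cast hn
  set v : Fin n → Vec q := fun i => g2 i (X i) (Y i) - g2 i xbar ystar with hv
  have hrw : (n : ℝ)⁻¹ • ∑ i, g2 i (X i) (Y i) = (n : ℝ)⁻¹ • ∑ i, v i := by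
    have h : ∑ i, v i = ∑ i, g2 i (X i) (Y i) - ∑ i, g2 i xbar ystar := by
      simp [hv, Finset.sum_sub_distrib]
    rw [h, smul_sub, hystar, sub_zero]
  -- pointwise bound
  have hvi : ∀ i, ‖v i‖ ^ 2 ≤ Lf1 ^ 2 * (‖X i - xbar‖ ^ 2 + 2 * ‖Y i - ybar‖ ^ 2)
      + 2 * Lf1 ^ 2 * ‖ybar - ystar‖ ^ 2 := by
    intro i
    have h1 := hglip i (X i) (Y i) xbar ystar
    have h2 : ‖Y i - ystar‖ ≤ ‖Y i - ybar‖ + ‖ybar - ystar‖ := by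
      have : Y i - ystar = (Y i - ybar) + (ybar - ystar) := by abel
      rw [this]; exact norm_add_le _ _
    have h3 : ‖Y i - ystar‖ ^ 2 ≤ 2 * ‖Y i - ybar‖ ^ 2 + 2 * ‖ybar - ystar‖ ^ 2 := by
      nlinarith [h2, sq_nonneg (‖Y i - ybar‖ - ‖ybar - ystar‖), norm_nonneg (Y i - ystar),
        norm_nonneg (Y i - ybar), norm_nonneg (ybar - ystar)]
    nlinarith [sq_nonneg (‖g1 i (X i) (Y i) - g1 i xbar ystar‖), sq_nonneg Lf1]
  -- norm of average
  have h4 : ‖(n : ℝ)⁻¹ • ∑ i, v i‖ ≤ (n : ℝ)⁻¹ * ∑ i, ‖v i‖ := by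
    rw [norm_smul]
    gcongr
    · simp [abs_of_nonneg (le_of_lt (inv_pos.mpr hn'))]
    · exact norm_sum_le _ _
  have h5 : (∑ i, ‖v i‖) ^ 2 ≤ n * ∑ i, ‖v i‖ ^ 2 := by
    have := sq_sum_le_card_mul_sum_sq (s := Finset.univ) (f := fun i => ‖v i‖)
    simpa using this
  have h6 : ‖(n : ℝ)⁻¹ • ∑ i, v i‖ ^ 2 ≤ (n : ℝ)⁻¹ * ∑ i, ‖v i‖ ^ 2 := by
    have hnonneg : (0:ℝ) ≤ ‖(n : ℝ)⁻¹ • ∑ i, v i‖ := norm_nonneg _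
    have := pow_le_pow_left₀ hnonneg h4 2
    calc ‖(n : ℝ)⁻¹ • ∑ i, v i‖ ^ 2 ≤ ((n : ℝ)⁻¹ * ∑ i, ‖v i‖) ^ 2 := this
      _ = (n : ℝ)⁻¹ ^ 2 * (∑ i, ‖v i‖) ^ 2 := by ring
      _ ≤ (n : ℝ)⁻¹ ^ 2 * (n * ∑ i, ‖v i‖ ^ 2) := by
          gcongr
      _ = (n : ℝ)⁻¹ * ∑ i, ‖v i‖ ^ 2 := by field_simp
  have h7 : ∑ i, ‖v i‖ ^ 2 ≤ 2 * Lf1 ^ 2 * ∑ i, (‖X i - xbar‖ ^ 2 + ‖Y i - ybar‖ ^ 2)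
      + n * (2 * Lf1 ^ 2 * ‖ybar - ystar‖ ^ 2) := by
    calc ∑ i, ‖v i‖ ^ 2
        ≤ ∑ i, (Lf1 ^ 2 * (‖X i - xbar‖ ^ 2 + 2 * ‖Y i - ybar‖ ^ 2)
            + 2 * Lf1 ^ 2 * ‖ybar - ystar‖ ^ 2) := Finset.sum_le_sum fun i _ => hvi i
      _ = Lf1 ^ 2 * ∑ i, (‖X i - xbar‖ ^ 2 + 2 * ‖Y i - ybar‖ ^ 2)
            + n * (2 * Lf1 ^ 2 * ‖ybar - ystar‖ ^ 2) := by
          rw [Finset.sum_add_distrib, Finset.mul_sum]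
          simp [Finset.sum_const, mul_comm]
      _ ≤ 2 * Lf1 ^ 2 * ∑ i, (‖X i - xbar‖ ^ 2 + ‖Y i - ybar‖ ^ 2)
            + n * (2 * Lf1 ^ 2 * ‖ybar - ystar‖ ^ 2) := by
          gcongr ?_ + _
          rw [Finset.mul_sum, Finset.mul_sum]
          apply Finset.sum_le_sum
          intro i _
          nlinarith [sq_nonneg Lf1, norm_nonneg (X i - xbar), norm_nonneg (Y i - ybar),
            sq_nonneg ‖X i - xbar‖, sq_nonneg ‖Y i - ybar‖]
  rw [hrw]
  calc ‖(n : ℝ)⁻¹ • ∑ i, v i‖ ^ 2 ≤ (n : ℝ)⁻¹ * ∑ i, ‖v i‖ ^ 2 := h6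
    _ ≤ (n : ℝ)⁻¹ * (2 * Lf1 ^ 2 * ∑ i, (‖X i - xbar‖ ^ 2 + ‖Y i - ybar‖ ^ 2)
          + n * (2 * Lf1 ^ 2 * ‖ybar - ystar‖ ^ 2)) := by
        gcongr
    _ = 2 * Lf1 ^ 2 / n * ∑ i, (‖X i - xbar‖ ^ 2 + ‖Y i - ybar‖ ^ 2)
          + 2 * Lf1 ^ 2 * ‖ybar - ystar‖ ^ 2 := by
        field_simp
end
end

section
/- For each i = 1, …, n, let F_i, f_i : ℝ^p × ℝ^q → ℝ be such that ∇F_i is L_{F,1}-Lipschitz, f_i is twice differentiable, ∇f_i is L_{f,1}-Lipschitz, and ∇²f_i is L_{f,2}-Lipschitz; set F := (1/n)Σ F_i and f := (1/n)Σ f_i. Let r_v ≥ 0 and let x̄ ∈ ℝ^p, y*, ȳ ∈ ℝ^q, v*, v̄ ∈ ℝ^q with ‖v*‖ ≤ r_v, ∇₂F(x̄, y*) = ∇²₂₂f(x̄, y*) v*, and points (x_i, y_i, v_i) with ‖v_i‖ ≤ r_v, x̄ = (1/n)Σ x_i, ȳ = (1/n)Σ y_i, v̄ = (1/n)Σ v_i.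 Set d̄_v := (1/n)Σ_{i=1}^n [∇₂F_i(x_i, y_i) − ∇²₂₂f_i(x_i, y_i) v_i]. Then ‖d̄_v‖² ≤ (5(L_{F,1} + r_v L_{f,2})²/n) Σ_i (‖x_i − x̄‖² + ‖y_i − ȳ‖²) + (5L_{f,1}²/n) Σ_i ‖v_i − v̄‖² + 5(L_{F,1} + r_v L_{f,2})² ‖ȳ − y*‖² + 5L_{f,1}² ‖v̄ − v*‖². -/
noncomputable section

set_option maxHeartbeats 1000000

private lemma le_of_sq_le_sq' {a b : ℝ} (ha : 0 ≤ a) (hb : 0 ≤ b) (h : a ^ 2 ≤ b ^ 2) :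
    a ≤ b := by nlinarith

private lemma avg_norm_sq_le {m : ℕ} {E : Type*} [NormedAddCommGroup E] [NormedSpace ℝ E]
    (a : Fin m → E) :
    ‖(m : ℝ)⁻¹ • ∑ i, a i‖ ^ 2 ≤ (m : ℝ)⁻¹ * ∑ i, ‖a i‖ ^ 2 := by
  rcases Nat.eq_zero_or_pos m with h | h
  · subst h; simp
  have hm : (0:ℝ) < m := by exact_mod_cast h
  have h1 : ‖∑ i, a i‖ ≤ ∑ i, ‖a i‖ := norm_sum_le _ _
  have h2 : (∑ i, ‖a i‖) ^ 2 ≤ (m : ℝ) * ∑ i, ‖a i‖ ^ 2 := by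
    have := sq_sum_le_card_mul_sum_sq (s := (Finset.univ : Finset (Fin m))) (f := fun i => ‖a i‖)
    simpa using this
  have h3 : ‖∑ i, a i‖ ^ 2 ≤ (∑ i, ‖a i‖) ^ 2 := by
    have hnn : (0:ℝ) ≤ ‖∑ i, a i‖ := norm_nonneg _
    nlinarith [Finset.sum_nonneg (fun i (_ : i ∈ Finset.univ) => norm_nonneg (a i))]
  have h4 : ‖(m : ℝ)⁻¹ • ∑ i, a i‖ = (m : ℝ)⁻¹ * ‖∑ i, a i‖ := by
    rw [norm_smul, Real.norm_eq_abs, abs_of_pos (by positivity)]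
  rw [h4]
  have : ((m : ℝ)⁻¹ * ‖∑ i, a i‖) ^ 2 = (m:ℝ)⁻¹ * ((m:ℝ)⁻¹ * ‖∑ i, a i‖ ^ 2) := by ring
  rw [this]
  have : (m:ℝ)⁻¹ * ‖∑ i, a i‖ ^ 2 ≤ ∑ i, ‖a i‖ ^ 2 := by
    rw [inv_mul_le_iff₀ hm]
    calc ‖∑ i, a i‖ ^ 2 ≤ (∑ i, ‖a i‖) ^ 2 := h3
      _ ≤ (m : ℝ) * ∑ i, ‖a i‖ ^ 2 := h2
      _ = (∑ i, ‖a i‖ ^ 2) * m := by ring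
      _ = (m:ℝ) * ∑ i, ‖a i‖ ^ 2 := mul_comm _ _
  exact mul_le_mul_of_nonneg_left this (by positivity)

private lemma five_sq {x A B C D E : ℝ} (hx : 0 ≤ x) (hA : 0 ≤ A) (hB : 0 ≤ B)
    (hC : 0 ≤ C) (hD : 0 ≤ D) (hE : 0 ≤ E) (h : x ≤ A + B + C + D + E) :
    x ^ 2 ≤ 5 * (A ^ 2 + B ^ 2 + C ^ 2 + D ^ 2 + E ^ 2) := by
  nlinarith [sq_nonneg (A - B), sq_nonneg (A - C), sq_nonneg (A - D), sq_nonneg (A - E),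
    sq_nonneg (B - C), sq_nonneg (B - D), sq_nonneg (B - E), sq_nonneg (C - D),
    sq_nonneg (C - E), sq_nonneg (D - E)]

private lemma avg_norm_le {m : ℕ} {E : Type*} [NormedAddCommGroup E] [NormedSpace ℝ E]
    (a : Fin m → E) {C : ℝ} (hC : 0 ≤ C) (h : ∀ i, ‖a i‖ ≤ C) :
    ‖(m : ℝ)⁻¹ • ∑ i, a i‖ ≤ C := by
  rcases Nat.eq_zero_or_pos m with hm | hm
  · subst hm; simpa using hC
  have hm' : (0:ℝ) < m := by exact_mod_cast hm
  have h4 : ‖(m : ℝ)⁻¹ • ∑ i, a i‖ = (m : ℝ)⁻¹ * ‖∑ i, a i‖ := by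
    rw [norm_smul, Real.norm_eq_abs, abs_of_pos (by positivity)]
  rw [h4, inv_mul_le_iff₀ hm']
  calc ‖∑ i, a i‖ ≤ ∑ i, ‖a i‖ := norm_sum_le _ _
    _ ≤ ∑ _i : Fin m, C := Finset.sum_le_sum (fun i _ => h i)
    _ = C * m := by simp [mul_comm]
    _ = m * C := mul_comm _ _

/-- Bound on the average direction
`d̄_v = (1/n) ∑ᵢ [∇₂Fᵢ(xᵢ, yᵢ) − ∇²₂₂fᵢ(xᵢ, yᵢ) vᵢ]`: under the stated Lipschitz
assumptions, with `‖v*‖ ≤ r_v`, `∇₂F(x̄, y*) = ∇²₂₂f(x̄, y*) v*`, `‖vᵢ‖ ≤ r_v`,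
`‖d̄_v‖² ≤ (5(L_{F,1}+r_v L_{f,2})²/n) ∑ (‖xᵢ−x̄‖²+‖yᵢ−ȳ‖²) + (5L_{f,1}²/n) ∑ ‖vᵢ−v̄‖²
  + 5(L_{F,1}+r_v L_{f,2})² ‖ȳ−y*‖² + 5L_{f,1}² ‖v̄−v*‖²`. -/
theorem sq_norm_dvbar_le {n p q : ℕ} (hn : 0 < n)
    (LF1 Lf1 Lf2 rv : ℝ)
    (hLF1 : 0 ≤ LF1) (hLf1 : 0 ≤ Lf1) (hLf2 : 0 ≤ Lf2) (hrv : 0 ≤ rv)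
    (F f : Fin n → Vec p → Vec q → ℝ)
    (gF1 : Fin n → Vec p → Vec q → Vec p) (gF2 : Fin n → Vec p → Vec q → Vec q)
    (g1 : Fin n → Vec p → Vec q → Vec p) (g2 : Fin n → Vec p → Vec q → Vec q)
    (f22 : Fin n → Vec p → Vec q → (Vec q →L[ℝ] Vec q))
    -- `gF1, gF2` are the partial gradients of `F i`, `g1, g2` those of `f i`
    (hgF1 : ∀ i x y, HasGradientAt (fun x' => F i x' y) (gF1 i x y) x)
    (hgF2 : ∀ i x y, HasGradientAt (fun y' => F i x y') (gF2 i x y) y)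
    (hg1 : ∀ i x y, HasGradientAt (fun x' => f i x' y) (g1 i x y) x)
    (hg2 : ∀ i x y, HasGradientAt (fun y' => f i x y') (g2 i x y) y)
    -- `f22 i x y` is the Hessian of `f i` w.r.t. the second block
    (hf22 : ∀ i x y, HasFDerivAt (fun y' => g2 i x y') (f22 i x y) y)
    -- `∇Fᵢ` is `L_{F,1}`-Lipschitz
    (hgFlip : ∀ i x y x' y',
      ‖gF1 i x y - gF1 i x' y'‖ ^ 2 + ‖gF2 i x y - gF2 i x' y'‖ ^ 2
        ≤ LF1 ^ 2 * (‖x - x'‖ ^ 2 + ‖y - y'‖ ^ 2))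
    -- `∇fᵢ` is `L_{f,1}`-Lipschitz
    (hglip : ∀ i x y x' y',
      ‖g1 i x y - g1 i x' y'‖ ^ 2 + ‖g2 i x y - g2 i x' y'‖ ^ 2
        ≤ Lf1 ^ 2 * (‖x - x'‖ ^ 2 + ‖y - y'‖ ^ 2))
    -- `∇²fᵢ` is `L_{f,2}`-Lipschitz
    (hf22lip : ∀ i x y x' y',
      ‖f22 i x y - f22 i x' y'‖ ≤ Lf2 * Real.sqrt (‖x - x'‖ ^ 2 + ‖y - y'‖ ^ 2))
    (X : Fin n → Vec p) (Y V : Fin n → Vec q)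
    (xbar : Vec p) (hxbar : xbar = (n : ℝ)⁻¹ • ∑ i, X i)
    (ybar : Vec q) (hybar : ybar = (n : ℝ)⁻¹ • ∑ i, Y i)
    (vbar : Vec q) (hvbar : vbar = (n : ℝ)⁻¹ • ∑ i, V i)
    (hV : ∀ i, ‖V i‖ ≤ rv)
    (ystar vstar : Vec q)
    (hvstar_norm : ‖vstar‖ ≤ rv)
    -- `∇₂F(x̄, y*) = ∇²₂₂f(x̄, y*) v*`, where `F = (1/n) ∑ Fᵢ`, `f = (1/n) ∑ fᵢ`
    (hsystem : (n : ℝ)⁻¹ • ∑ i, gF2 i xbar ystar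
      = (n : ℝ)⁻¹ • ∑ i, (f22 i xbar ystar) vstar) :
    ‖(n : ℝ)⁻¹ • ∑ i, (gF2 i (X i) (Y i) - (f22 i (X i) (Y i)) (V i))‖ ^ 2
      ≤ 5 * (LF1 + rv * Lf2) ^ 2 / n * ∑ i, (‖X i - xbar‖ ^ 2 + ‖Y i - ybar‖ ^ 2)
        + 5 * Lf1 ^ 2 / n * ∑ i, ‖V i - vbar‖ ^ 2
        + 5 * (LF1 + rv * Lf2) ^ 2 * ‖ybar - ystar‖ ^ 2
        + 5 * Lf1 ^ 2 * ‖vbar - vstar‖ ^ 2 := by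
  have hnR : (0:ℝ) < n := by exact_mod_cast hn
  -- Hessian operator norm bound: ‖f22 i x y‖ ≤ Lf1
  have hf22norm : ∀ i x y, ‖f22 i x y‖ ≤ Lf1 := by
    intro i x y
    refine (hf22 i x y).le_of_lip' hLf1 ?_
    filter_upwards with y'
    have h := hglip i x y' x y
    have h2 : ‖g2 i x y' - g2 i x y‖ ^ 2 ≤ (Lf1 * ‖y' - y‖) ^ 2 := by
      simp only [sub_self, norm_zero] at h
      nlinarith [sq_nonneg ‖g1 i x y' - g1 i x y‖]
    exact le_of_sq_le_sq' (norm_nonneg _) (by positivity) h2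
  -- bound on ‖vbar‖
  have hvbar_norm : ‖vbar‖ ≤ rv := by
    rw [hvbar]; exact avg_norm_le V hrv hV
  -- The five pieces
  set T1 : Fin n → Vec q := fun i => gF2 i (X i) (Y i) - gF2 i xbar ybar with hT1
  set T2 : Fin n → Vec q := fun i => -((f22 i (X i) (Y i) - f22 i xbar ybar) (V i)) with hT2
  set T3 : Fin n → Vec q := fun i => -((f22 i xbar ybar) (V i - vbar)) with hT3
  set T4 : Fin n → Vec q := fun i =>
    gF2 i xbar ybar - gF2 i xbar ystar - (f22 i xbar ybar - f22 i xbar ystar) vbar with hT4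
  set T5 : Fin n → Vec q := fun i => -((f22 i xbar ystar) (vbar - vstar)) with hT5
  set E : Fin n → Vec q := fun i => gF2 i xbar ystar - (f22 i xbar ystar) vstar with hE
  have hdecomp : ∀ i, gF2 i (X i) (Y i) - (f22 i (X i) (Y i)) (V i)
      = T1 i + T2 i + T3 i + T4 i + T5 i + E i := by
    intro i
    simp only [hT1, hT2, hT3, hT4, hT5, hE, ContinuousLinearMap.sub_apply, map_sub]
    abel
  have hEavg : (n : ℝ)⁻¹ • ∑ i, E i = 0 := by
    simp only [hE, Finset.sum_sub_distrib, smul_sub, hsystem, sub_self]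
  have hsplit : (n : ℝ)⁻¹ • ∑ i, (gF2 i (X i) (Y i) - (f22 i (X i) (Y i)) (V i))
      = (n : ℝ)⁻¹ • ∑ i, T1 i + (n : ℝ)⁻¹ • ∑ i, T2 i + (n : ℝ)⁻¹ • ∑ i, T3 i
        + (n : ℝ)⁻¹ • ∑ i, T4 i + (n : ℝ)⁻¹ • ∑ i, T5 i := by
    have : ∑ i, (gF2 i (X i) (Y i) - (f22 i (X i) (Y i)) (V i))
        = ∑ i, T1 i + ∑ i, T2 i + ∑ i, T3 i + ∑ i, T4 i + ∑ i, T5 i + ∑ i, E i := by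
      rw [← Finset.sum_add_distrib, ← Finset.sum_add_distrib, ← Finset.sum_add_distrib,
        ← Finset.sum_add_distrib, ← Finset.sum_add_distrib]
      exact Finset.sum_congr rfl (fun i _ => hdecomp i)
    rw [this]
    simp only [smul_add, hEavg, add_zero]
  set a1 := (n : ℝ)⁻¹ • ∑ i, T1 i
  set a2 := (n : ℝ)⁻¹ • ∑ i, T2 i
  set a3 := (n : ℝ)⁻¹ • ∑ i, T3 i
  set a4 := (n : ℝ)⁻¹ • ∑ i, T4 i
  set a5 := (n : ℝ)⁻¹ • ∑ i, T5 i
  set S1 := ∑ i, (‖X i - xbar‖ ^ 2 + ‖Y i - ybar‖ ^ 2) with hS1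
  set S3 := ∑ i, ‖V i - vbar‖ ^ 2 with hS3
  have hS1nn : 0 ≤ S1 := Finset.sum_nonneg (fun i _ => by positivity)
  have hS3nn : 0 ≤ S3 := Finset.sum_nonneg (fun i _ => by positivity)
  -- bound a1
  have hsT1 : ∀ i, ‖T1 i‖ ^ 2 ≤ LF1 ^ 2 * (‖X i - xbar‖ ^ 2 + ‖Y i - ybar‖ ^ 2) := by
    intro i
    have h := hgFlip i (X i) (Y i) xbar ybar
    nlinarith [sq_nonneg ‖gF1 i (X i) (Y i) - gF1 i xbar ybar‖]
  have ha1 : ‖a1‖ ^ 2 ≤ LF1 ^ 2 * ((n:ℝ)⁻¹ * S1) := by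
    calc ‖a1‖ ^ 2 ≤ (n:ℝ)⁻¹ * ∑ i, ‖T1 i‖ ^ 2 := avg_norm_sq_le T1
      _ ≤ (n:ℝ)⁻¹ * ∑ i, LF1 ^ 2 * (‖X i - xbar‖ ^ 2 + ‖Y i - ybar‖ ^ 2) := by
          apply mul_le_mul_of_nonneg_left (Finset.sum_le_sum (fun i _ => hsT1 i)) (by positivity)
      _ = LF1 ^ 2 * ((n:ℝ)⁻¹ * S1) := by rw [← Finset.mul_sum]; ring
  -- bound a2
  have hsT2 : ∀ i, ‖T2 i‖ ^ 2 ≤ rv ^ 2 * Lf2 ^ 2 * (‖X i - xbar‖ ^ 2 + ‖Y i - ybar‖ ^ 2) := by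
    intro i
    have hop : ‖(f22 i (X i) (Y i) - f22 i xbar ybar) (V i)‖
        ≤ ‖f22 i (X i) (Y i) - f22 i xbar ybar‖ * ‖V i‖ :=
      ContinuousLinearMap.le_opNorm _ _
    have hlip := hf22lip i (X i) (Y i) xbar ybar
    have hs : Real.sqrt (‖X i - xbar‖ ^ 2 + ‖Y i - ybar‖ ^ 2) ^ 2
        = ‖X i - xbar‖ ^ 2 + ‖Y i - ybar‖ ^ 2 := Real.sq_sqrt (by positivity)
    have hVi := hV i
    have hnn : (0:ℝ) ≤ Real.sqrt (‖X i - xbar‖ ^ 2 + ‖Y i - ybar‖ ^ 2) := Real.sqrt_nonneg _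
    have h1 : ‖T2 i‖ = ‖(f22 i (X i) (Y i) - f22 i xbar ybar) (V i)‖ := by
      simp only [hT2, norm_neg]
    rw [h1]
    have h2 : ‖(f22 i (X i) (Y i) - f22 i xbar ybar) (V i)‖
        ≤ Lf2 * Real.sqrt (‖X i - xbar‖ ^ 2 + ‖Y i - ybar‖ ^ 2) * rv :=
      hop.trans (mul_le_mul hlip hVi (norm_nonneg _) (by positivity))
    calc ‖(f22 i (X i) (Y i) - f22 i xbar ybar) (V i)‖ ^ 2
        ≤ (Lf2 * Real.sqrt (‖X i - xbar‖ ^ 2 + ‖Y i - ybar‖ ^ 2) * rv) ^ 2 :=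
          pow_le_pow_left₀ (norm_nonneg _) h2 2
      _ = rv ^ 2 * Lf2 ^ 2 * Real.sqrt (‖X i - xbar‖ ^ 2 + ‖Y i - ybar‖ ^ 2) ^ 2 := by ring
      _ = rv ^ 2 * Lf2 ^ 2 * (‖X i - xbar‖ ^ 2 + ‖Y i - ybar‖ ^ 2) := by rw [hs]
  have ha2 : ‖a2‖ ^ 2 ≤ rv ^ 2 * Lf2 ^ 2 * ((n:ℝ)⁻¹ * S1) := by
    calc ‖a2‖ ^ 2 ≤ (n:ℝ)⁻¹ * ∑ i, ‖T2 i‖ ^ 2 := avg_norm_sq_le T2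
      _ ≤ (n:ℝ)⁻¹ * ∑ i, rv ^ 2 * Lf2 ^ 2 * (‖X i - xbar‖ ^ 2 + ‖Y i - ybar‖ ^ 2) := by
          apply mul_le_mul_of_nonneg_left (Finset.sum_le_sum (fun i _ => hsT2 i)) (by positivity)
      _ = rv ^ 2 * Lf2 ^ 2 * ((n:ℝ)⁻¹ * S1) := by rw [← Finset.mul_sum]; ring
  -- bound a3
  have hsT3 : ∀ i, ‖T3 i‖ ^ 2 ≤ Lf1 ^ 2 * ‖V i - vbar‖ ^ 2 := by
    intro i
    have hop : ‖(f22 i xbar ybar) (V i - vbar)‖ ≤ ‖f22 i xbar ybar‖ * ‖V i - vbar‖ :=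
      ContinuousLinearMap.le_opNorm _ _
    have h1 : ‖T3 i‖ = ‖(f22 i xbar ybar) (V i - vbar)‖ := by simp only [hT3, norm_neg]
    rw [h1]
    have h2 : ‖(f22 i xbar ybar) (V i - vbar)‖ ≤ Lf1 * ‖V i - vbar‖ :=
      hop.trans (mul_le_mul_of_nonneg_right (hf22norm i xbar ybar) (norm_nonneg _))
    calc ‖(f22 i xbar ybar) (V i - vbar)‖ ^ 2 ≤ (Lf1 * ‖V i - vbar‖) ^ 2 :=
        pow_le_pow_left₀ (norm_nonneg _) h2 2
      _ = Lf1 ^ 2 * ‖V i - vbar‖ ^ 2 := by ring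
  have ha3 : ‖a3‖ ^ 2 ≤ Lf1 ^ 2 * ((n:ℝ)⁻¹ * S3) := by
    calc ‖a3‖ ^ 2 ≤ (n:ℝ)⁻¹ * ∑ i, ‖T3 i‖ ^ 2 := avg_norm_sq_le T3
      _ ≤ (n:ℝ)⁻¹ * ∑ i, Lf1 ^ 2 * ‖V i - vbar‖ ^ 2 := by
          apply mul_le_mul_of_nonneg_left (Finset.sum_le_sum (fun i _ => hsT3 i)) (by positivity)
      _ = Lf1 ^ 2 * ((n:ℝ)⁻¹ * S3) := by rw [← Finset.mul_sum]; ring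
  -- bound a4
  have ha4 : ‖a4‖ ≤ (LF1 + rv * Lf2) * ‖ybar - ystar‖ := by
    apply avg_norm_le T4 (by positivity)
    intro i
    have hbF : ‖gF2 i xbar ybar - gF2 i xbar ystar‖ ≤ LF1 * ‖ybar - ystar‖ := by
      have h := hgFlip i xbar ybar xbar ystar
      simp only [sub_self, norm_zero] at h
      refine le_of_sq_le_sq' (norm_nonneg _) (by positivity) ?_
      nlinarith [sq_nonneg ‖gF1 i xbar ybar - gF1 i xbar ystar‖]
    have hbf : ‖(f22 i xbar ybar - f22 i xbar ystar) vbar‖ ≤ Lf2 * ‖ybar - ystar‖ * rv := by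
      have hop : ‖(f22 i xbar ybar - f22 i xbar ystar) vbar‖
          ≤ ‖f22 i xbar ybar - f22 i xbar ystar‖ * ‖vbar‖ :=
        ContinuousLinearMap.le_opNorm _ _
      have hlip := hf22lip i xbar ybar xbar ystar
      have hs : Real.sqrt (‖xbar - xbar‖ ^ 2 + ‖ybar - ystar‖ ^ 2) = ‖ybar - ystar‖ := by
        simp [Real.sqrt_sq (norm_nonneg _)]
      rw [hs] at hlip
      calc ‖(f22 i xbar ybar - f22 i xbar ystar) vbar‖
          ≤ ‖f22 i xbar ybar - f22 i xbar ystar‖ * ‖vbar‖ := hop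
        _ ≤ (Lf2 * ‖ybar - ystar‖) * rv := by
            apply mul_le_mul hlip hvbar_norm (norm_nonneg _) (by positivity)
        _ = Lf2 * ‖ybar - ystar‖ * rv := by ring
    calc ‖T4 i‖ ≤ ‖gF2 i xbar ybar - gF2 i xbar ystar‖
          + ‖(f22 i xbar ybar - f22 i xbar ystar) vbar‖ := norm_sub_le _ _
      _ ≤ LF1 * ‖ybar - ystar‖ + Lf2 * ‖ybar - ystar‖ * rv := add_le_add hbF hbf
      _ = (LF1 + rv * Lf2) * ‖ybar - ystar‖ := by ring
  -- bound a5
  have ha5 : ‖a5‖ ≤ Lf1 * ‖vbar - vstar‖ := by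
    apply avg_norm_le T5 (by positivity)
    intro i
    have h1 : ‖T5 i‖ = ‖(f22 i xbar ystar) (vbar - vstar)‖ := by simp only [hT5, norm_neg]
    rw [h1]
    calc ‖(f22 i xbar ystar) (vbar - vstar)‖ ≤ ‖f22 i xbar ystar‖ * ‖vbar - vstar‖ :=
        ContinuousLinearMap.le_opNorm _ _
      _ ≤ Lf1 * ‖vbar - vstar‖ :=
        mul_le_mul_of_nonneg_right (hf22norm i xbar ystar) (norm_nonneg _)
  -- combine
  have hfive : ‖(n : ℝ)⁻¹ • ∑ i, (gF2 i (X i) (Y i) - (f22 i (X i) (Y i)) (V i))‖ ^ 2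
      ≤ 5 * (‖a1‖ ^ 2 + ‖a2‖ ^ 2 + ‖a3‖ ^ 2 + ‖a4‖ ^ 2 + ‖a5‖ ^ 2) := by
    rw [hsplit]
    have htri : ‖a1 + a2 + a3 + a4 + a5‖ ≤ ‖a1‖ + ‖a2‖ + ‖a3‖ + ‖a4‖ + ‖a5‖ := by
      calc ‖a1 + a2 + a3 + a4 + a5‖ ≤ ‖a1 + a2 + a3 + a4‖ + ‖a5‖ := norm_add_le _ _
        _ ≤ ‖a1 + a2 + a3‖ + ‖a4‖ + ‖a5‖ := by gcongr; exact norm_add_le _ _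
        _ ≤ ‖a1 + a2‖ + ‖a3‖ + ‖a4‖ + ‖a5‖ := by gcongr; exact norm_add_le _ _
        _ ≤ ‖a1‖ + ‖a2‖ + ‖a3‖ + ‖a4‖ + ‖a5‖ := by gcongr; exact norm_add_le _ _
    exact five_sq (norm_nonneg _) (norm_nonneg a1) (norm_nonneg a2) (norm_nonneg a3)
      (norm_nonneg a4) (norm_nonneg a5) htri
  have ha4' : ‖a4‖ ^ 2 ≤ (LF1 + rv * Lf2) ^ 2 * ‖ybar - ystar‖ ^ 2 := by
    calc ‖a4‖ ^ 2 ≤ ((LF1 + rv * Lf2) * ‖ybar - ystar‖) ^ 2 :=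
        pow_le_pow_left₀ (norm_nonneg _) ha4 2
      _ = (LF1 + rv * Lf2) ^ 2 * ‖ybar - ystar‖ ^ 2 := by ring
  have ha5' : ‖a5‖ ^ 2 ≤ Lf1 ^ 2 * ‖vbar - vstar‖ ^ 2 := by
    calc ‖a5‖ ^ 2 ≤ (Lf1 * ‖vbar - vstar‖) ^ 2 := pow_le_pow_left₀ (norm_nonneg _) ha5 2
      _ = Lf1 ^ 2 * ‖vbar - vstar‖ ^ 2 := by ring
  have hNS1 : 0 ≤ (n:ℝ)⁻¹ * S1 := by positivity
  have hNS3 : 0 ≤ (n:ℝ)⁻¹ * S3 := by positivity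
  have hgoal1 : 5 * (LF1 + rv * Lf2) ^ 2 / n * S1 = 5 * (LF1 + rv * Lf2) ^ 2 * ((n:ℝ)⁻¹ * S1) := by
    field_simp
  have hgoal2 : 5 * Lf1 ^ 2 / n * S3 = 5 * Lf1 ^ 2 * ((n:ℝ)⁻¹ * S3) := by
    field_simp
  rw [hgoal1, hgoal2]
  have hcross : LF1 ^ 2 + rv ^ 2 * Lf2 ^ 2 ≤ (LF1 + rv * Lf2) ^ 2 := by
    nlinarith [mul_nonneg hLF1 (mul_nonneg hrv hLf2)]
  have hmul : (LF1 ^ 2 + rv ^ 2 * Lf2 ^ 2) * ((n:ℝ)⁻¹ * S1)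
      ≤ (LF1 + rv * Lf2) ^ 2 * ((n:ℝ)⁻¹ * S1) :=
    mul_le_mul_of_nonneg_right hcross hNS1
  linarith [hfive, ha1, ha2, ha3, ha4', ha5']
end
end

section
/- For each i = 1, …, n, let F_i, f_i : ℝ^p × ℝ^q → ℝ be such that ∇F_i is L_{F,1}-Lipschitz, f_i is twice differentiable, ∇f_i is L_{f,1}-Lipschitz, ∇²f_i is L_{f,2}-Lipschitz; set F := (1/n)Σ F_i, f := (1/n)Σ f_i. Let Φ : ℝ^p → ℝ be differentiable with L_Φ-Lipschitz gradient, and suppose x̄ ∈ ℝ^p, y* ∈ ℝ^q, v* ∈ ℝ^q satisfy ∇Φ(x̄) = ∇₁F(x̄, y*) − ∇²₁₂f(x̄, y*) v*. Let r_v ≥ 0 with ‖v*‖ ≤ r_v, let (x_i, y_i, v_i) be points with ‖v_i‖ ≤ r_v, x̄ = (1/n)Σ x_i, ȳ := (1/n)Σ y_i, v̄ := (1/n)Σ v_i, set d̄_x := (1/n)Σ_{i=1}^n [∇₁F_i(x_i, y_i) − ∇²₁₂f_i(x_i, y_i) v_i] and, for a step size α > 0, x̄⁺ := x̄ − α d̄_x.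 Then Φ(x̄⁺) − Φ(x̄) ≤ −(α/2)‖∇Φ(x̄)‖² − (1/2)(1/α − L_Φ)‖x̄⁺ − x̄‖² + (5αL_{f,1}²/2)‖v̄ − v*‖² + (5α(L_{F,1} + L_{f,2} r_v)²/2)‖ȳ − y*‖² + (5αL_{f,1}²/(2n)) Σ_i ‖v_i − v̄‖² + (5α(L_{F,1} + r_v L_{f,2})²/(2n)) Σ_i (‖x_i − x̄‖² + ‖y_i − ȳ‖²). -/
noncomputable section
open Finset in
/-- Jensen: norm-square of an average is at most the average of norm-squares. -/
lemma jensen_avg {d n : ℕ} (hn : 0 < n) (w : Fin n → Vec d) :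
    ‖(n : ℝ)⁻¹ • ∑ i, w i‖ ^ 2 ≤ (n : ℝ)⁻¹ * ∑ i, ‖w i‖ ^ 2 := by
  have hn' : (0:ℝ) < n := by exact_mod_cast hn
  have h1 : ‖(n : ℝ)⁻¹ • ∑ i, w i‖ = (n:ℝ)⁻¹ * ‖∑ i, w i‖ := by
    rw [norm_smul, Real.norm_eq_abs, abs_inv, abs_of_pos hn']
  have h2 : ‖∑ i, w i‖ ≤ ∑ i, ‖w i‖ := norm_sum_le _ _
  have h3 : (∑ i, ‖w i‖) ^ 2 ≤ (n:ℝ) * ∑ i, ‖w i‖ ^ 2 := by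
    simpa using sq_sum_le_card_mul_sum_sq (s := Finset.univ) (f := fun i => ‖w i‖)
  calc ‖(n : ℝ)⁻¹ • ∑ i, w i‖ ^ 2 = ((n:ℝ)⁻¹)^2 * ‖∑ i, w i‖^2 := by rw [h1]; ring
    _ ≤ ((n:ℝ)⁻¹)^2 * (∑ i, ‖w i‖)^2 := by
        gcongr

    _ ≤ ((n:ℝ)⁻¹)^2 * ((n:ℝ) * ∑ i, ‖w i‖ ^ 2) := by
        gcongr
    _ = (n : ℝ)⁻¹ * ∑ i, ‖w i‖ ^ 2 := by field_simp

/-- Descent lemma for Lipschitz-gradient functions. -/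
lemma descent_lemma {d : ℕ} (L : ℝ) (hL : 0 ≤ L) (Φ : Vec d → ℝ) (g : Vec d → Vec d)
    (hΦ : ∀ z, HasGradientAt Φ (g z) z)
    (hlip : ∀ z z', ‖g z - g z'‖ ≤ L * ‖z - z'‖) (x y : Vec d) :
    Φ y ≤ Φ x + (inner ℝ (g x) (y - x) : ℝ) + L / 2 * ‖y - x‖ ^ 2 := by
  set u := y - x with hu
  set h : ℝ → ℝ := fun t => Φ (x + t • u) - t * (inner ℝ (g x) u : ℝ) - L / 2 * t ^ 2 * ‖u‖ ^ 2
    with hh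
  have hderiv : ∀ t : ℝ, HasDerivAt h
      ((inner ℝ (g (x + t • u)) u : ℝ) - (inner ℝ (g x) u : ℝ) - L * t * ‖u‖ ^ 2) t := by
    intro t
    have h1 : HasDerivAt (fun t : ℝ => x + t • u) u t := by
      simpa using ((hasDerivAt_id t).smul_const u).const_add x
    have h2 : HasDerivAt (fun t : ℝ => Φ (x + t • u)) ((inner ℝ (g (x + t • u)) u : ℝ)) t := by
      have := ((hΦ (x + t • u)).hasFDerivAt.comp_hasDerivAt t h1)
      simp [InnerProductSpace.toDual_apply_apply] at this
      exact this
    have h3 : HasDerivAt (fun t : ℝ => t * (inner ℝ (g x) u : ℝ)) ((inner ℝ (g x) u : ℝ)) t := by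
      simpa using (hasDerivAt_id t).mul_const (inner ℝ (g x) u : ℝ)
    have h4 : HasDerivAt (fun t : ℝ => L / 2 * t ^ 2 * ‖u‖ ^ 2) (L * t * ‖u‖ ^ 2) t := by
      have h5 : HasDerivAt (fun t : ℝ => t ^ 2) (2 * t) t := by
        simpa using hasDerivAt_pow 2 t
      have := (h5.const_mul (L / 2)).mul_const (‖u‖ ^ 2)
      exact this.congr_deriv (by ring)
    exact (h2.sub h3).sub h4
  have hdiff : Differentiable ℝ h := fun t => (hderiv t).differentiableAt
  have hanti : AntitoneOn h (Set.Icc (0:ℝ) 1) := by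
    apply antitoneOn_of_deriv_nonpos (convex_Icc 0 1) hdiff.continuous.continuousOn
      (fun t _ => (hdiff t).differentiableWithinAt)
    intro t ht
    rw [interior_Icc] at ht
    rw [(hderiv t).deriv]
    have kb : (inner ℝ (g (x + t • u)) u : ℝ) - (inner ℝ (g x) u : ℝ) ≤ L * t * ‖u‖ ^ 2 := by
      have e1 : (inner ℝ (g (x + t • u)) u : ℝ) - (inner ℝ (g x) u : ℝ)
          = (inner ℝ (g (x + t • u) - g x) u : ℝ) := by rw [inner_sub_left]
      rw [e1]
      calc (inner ℝ (g (x + t • u) - g x) u : ℝ) ≤ ‖g (x + t • u) - g x‖ * ‖u‖ :=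
            real_inner_le_norm _ _
        _ ≤ (L * ‖x + t • u - x‖) * ‖u‖ :=
            mul_le_mul_of_nonneg_right (hlip _ _) (norm_nonneg _)
        _ = L * t * ‖u‖ ^ 2 := by
            have : x + t • u - x = t • u := by abel
            rw [this, norm_smul, Real.norm_eq_abs, abs_of_pos ht.1]
            ring
    linarith
  have key := hanti (Set.left_mem_Icc.2 zero_le_one) (Set.right_mem_Icc.2 zero_le_one) zero_le_one
  have hxy : x + (1:ℝ) • u = y := by rw [one_smul, hu]; abel
  simp only [hh, hxy, zero_smul, add_zero, one_pow, zero_pow, zero_mul, mul_zero, sub_zero] at key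
  linarith

lemma norm_le_of_sq_le {E : Type*} [NormedAddCommGroup E] (a : E) (b : ℝ) (hb : 0 ≤ b)
    (h : ‖a‖ ^ 2 ≤ b ^ 2) : ‖a‖ ≤ b :=
  le_of_pow_le_pow_left₀ two_ne_zero hb h

/-- Pointwise bound: `‖(∇₁F − ∇₁F') − (T − T') v‖² ≤ (L_F + r_v L_f)² s`. -/
lemma key_bound {p q : ℕ} (LF1 Lf2 rv : ℝ) (hLF1 : 0 ≤ LF1) (hLf2 : 0 ≤ Lf2) (hrv : 0 ≤ rv)
    (a a' : Vec p) (T T' : Vec q →L[ℝ] Vec p) (v : Vec q) (hv : ‖v‖ ≤ rv) (s : ℝ) (hs : 0 ≤ s)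
    (hF : ‖a - a'‖ ^ 2 ≤ LF1 ^ 2 * s) (hT : ‖T - T'‖ ≤ Lf2 * Real.sqrt s) :
    ‖a - a' - (T - T') v‖ ^ 2 ≤ (LF1 + rv * Lf2) ^ 2 * s := by
  have hsq : Real.sqrt s ^ 2 = s := Real.sq_sqrt hs
  have h1 : ‖a - a'‖ ≤ LF1 * Real.sqrt s := by
    apply norm_le_of_sq_le _ _ (by positivity)
    calc ‖a - a'‖ ^ 2 ≤ LF1 ^ 2 * s := hF
      _ = (LF1 * Real.sqrt s) ^ 2 := by rw [mul_pow, hsq]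
  have h2 : ‖(T - T') v‖ ≤ Lf2 * Real.sqrt s * rv := by
    calc ‖(T - T') v‖ ≤ ‖T - T'‖ * ‖v‖ := (T - T').le_opNorm v
      _ ≤ (Lf2 * Real.sqrt s) * rv := by
          apply mul_le_mul hT hv (norm_nonneg _) (by positivity)
  have h3 : ‖a - a' - (T - T') v‖ ≤ (LF1 + rv * Lf2) * Real.sqrt s := by
    calc ‖a - a' - (T - T') v‖ ≤ ‖a - a'‖ + ‖(T - T') v‖ := norm_sub_le _ _
      _ ≤ LF1 * Real.sqrt s + Lf2 * Real.sqrt s * rv := add_le_add h1 h2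
      _ = (LF1 + rv * Lf2) * Real.sqrt s := by ring
  calc ‖a - a' - (T - T') v‖ ^ 2 ≤ ((LF1 + rv * Lf2) * Real.sqrt s) ^ 2 :=
        pow_le_pow_left₀ (norm_nonneg _) h3 2
    _ = (LF1 + rv * Lf2) ^ 2 * s := by rw [mul_pow, hsq]

/-- If the gradient of `f(x, ·)` is `L`-Lipschitz, then its Jacobian has operator norm `≤ L`. -/
lemma opnorm_le_of_lip {p q : ℕ} (L : ℝ) (hL : 0 ≤ L)
    (g : Vec q → Vec p) (T : Vec q → (Vec q →L[ℝ] Vec p))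
    (hT : ∀ y, HasFDerivAt g (T y) y)
    (hlip : ∀ y y', ‖g y - g y'‖ ≤ L * ‖y - y'‖) (y : Vec q) : ‖T y‖ ≤ L := by
  apply (hT y).le_of_lip' hL
  exact Filter.Eventually.of_forall fun z => hlip z y

set_option maxHeartbeats 1600000 in
/-- One-step descent estimate for the upper-level objective `Φ` along the
average direction `d̄_x = (1/n) ∑ᵢ [∇₁Fᵢ(xᵢ, yᵢ) − ∇²₁₂fᵢ(xᵢ, yᵢ) vᵢ]`, where `Φ` is
differentiable with `L_Φ`-Lipschitz gradient and
`∇Φ(x̄) = ∇₁F(x̄, y*) − ∇²₁₂f(x̄, y*) v*`, and `x̄⁺ = x̄ − α d̄_x`. -/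
theorem descent_step_Phi {n p q : ℕ} (hn : 0 < n)
    (LF1 Lf1 Lf2 LΦ rv α : ℝ)
    (hLF1 : 0 ≤ LF1) (hLf1 : 0 ≤ Lf1) (hLf2 : 0 ≤ Lf2) (hLΦ : 0 ≤ LΦ)
    (hrv : 0 ≤ rv) (hα : 0 < α)
    (F f : Fin n → Vec p → Vec q → ℝ)
    (gF1 : Fin n → Vec p → Vec q → Vec p) (gF2 : Fin n → Vec p → Vec q → Vec q)
    (g1 : Fin n → Vec p → Vec q → Vec p) (g2 : Fin n → Vec p → Vec q → Vec q)
    (f12 : Fin n → Vec p → Vec q → (Vec q →L[ℝ] Vec p))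
    -- `gF1, gF2` are the partial gradients of `F i`, `g1, g2` those of `f i`
    (hgF1 : ∀ i x y, HasGradientAt (fun x' => F i x' y) (gF1 i x y) x)
    (hgF2 : ∀ i x y, HasGradientAt (fun y' => F i x y') (gF2 i x y) y)
    (hg1 : ∀ i x y, HasGradientAt (fun x' => f i x' y) (g1 i x y) x)
    (hg2 : ∀ i x y, HasGradientAt (fun y' => f i x y') (g2 i x y) y)
    -- `f12 i x y` is the Jacobian of `∇₁fᵢ` w.r.t. `y`
    (hf12 : ∀ i x y, HasFDerivAt (fun y' => g1 i x y') (f12 i x y) y)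
    -- `∇Fᵢ` is `L_{F,1}`-Lipschitz
    (hgFlip : ∀ i x y x' y',
      ‖gF1 i x y - gF1 i x' y'‖ ^ 2 + ‖gF2 i x y - gF2 i x' y'‖ ^ 2
        ≤ LF1 ^ 2 * (‖x - x'‖ ^ 2 + ‖y - y'‖ ^ 2))
    -- `∇fᵢ` is `L_{f,1}`-Lipschitz
    (hglip : ∀ i x y x' y',
      ‖g1 i x y - g1 i x' y'‖ ^ 2 + ‖g2 i x y - g2 i x' y'‖ ^ 2
        ≤ Lf1 ^ 2 * (‖x - x'‖ ^ 2 + ‖y - y'‖ ^ 2))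
    -- `∇²fᵢ` is `L_{f,2}`-Lipschitz
    (hf12lip : ∀ i x y x' y',
      ‖f12 i x y - f12 i x' y'‖ ≤ Lf2 * Real.sqrt (‖x - x'‖ ^ 2 + ‖y - y'‖ ^ 2))
    -- `Φ` is differentiable with gradient `gradPhi`, which is `L_Φ`-Lipschitz
    (Φ : Vec p → ℝ) (gradPhi : Vec p → Vec p)
    (hΦ : ∀ z, HasGradientAt Φ (gradPhi z) z)
    (hΦlip : ∀ z z', ‖gradPhi z - gradPhi z'‖ ≤ LΦ * ‖z - z'‖)
    (X : Fin n → Vec p) (Y V : Fin n → Vec q)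
    (xbar : Vec p) (hxbar : xbar = (n : ℝ)⁻¹ • ∑ i, X i)
    (ybar : Vec q) (hybar : ybar = (n : ℝ)⁻¹ • ∑ i, Y i)
    (vbar : Vec q) (hvbar : vbar = (n : ℝ)⁻¹ • ∑ i, V i)
    (hV : ∀ i, ‖V i‖ ≤ rv)
    (ystar vstar : Vec q) (hvstar_norm : ‖vstar‖ ≤ rv)
    -- `∇Φ(x̄) = ∇₁F(x̄, y*) − ∇²₁₂f(x̄, y*) v*`, with `F = (1/n) ∑ Fᵢ`, `f = (1/n) ∑ fᵢ`
    (hhyper : gradPhi xbar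
      = (n : ℝ)⁻¹ • ∑ i, gF1 i xbar ystar - (n : ℝ)⁻¹ • ∑ i, (f12 i xbar ystar) vstar)
    -- the average direction `d̄_x` and the update `x̄⁺ = x̄ − α d̄_x`
    (dbar : Vec p)
    (hdbar : dbar = (n : ℝ)⁻¹ • ∑ i, (gF1 i (X i) (Y i) - (f12 i (X i) (Y i)) (V i)))
    (xplus : Vec p) (hxplus : xplus = xbar - α • dbar) :
    Φ xplus - Φ xbar
      ≤ -(α / 2) * ‖gradPhi xbar‖ ^ 2
        - 1 / 2 * (1 / α - LΦ) * ‖xplus - xbar‖ ^ 2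
        + 5 * α * Lf1 ^ 2 / 2 * ‖vbar - vstar‖ ^ 2
        + 5 * α * (LF1 + Lf2 * rv) ^ 2 / 2 * ‖ybar - ystar‖ ^ 2
        + 5 * α * Lf1 ^ 2 / (2 * n) * ∑ i, ‖V i - vbar‖ ^ 2
        + 5 * α * (LF1 + rv * Lf2) ^ 2 / (2 * n)
            * ∑ i, (‖X i - xbar‖ ^ 2 + ‖Y i - ybar‖ ^ 2) := by
  
  -- ‖f12 i x y‖ ≤ Lf1
  have hnR : (0:ℝ) < n := by exact_mod_cast hn
  have hnne : (n:ℝ) ≠ 0 := ne_of_gt hnR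
  have hop : ∀ i x y, ‖f12 i x y‖ ≤ Lf1 := by
    intro i x y
    apply opnorm_le_of_lip Lf1 hLf1 (fun y' => g1 i x y') (fun y' => f12 i x y') (hf12 i x)
    intro a b
    have h := hglip i x a x b
    simp only [sub_self, norm_zero] at h
    have h0 : ‖g1 i x a - g1 i x b‖ ^ 2 ≤ (Lf1 * ‖a - b‖) ^ 2 := by
      nlinarith [sq_nonneg ‖g2 i x a - g2 i x b‖]
    exact norm_le_of_sq_le _ _ (by positivity) h0
  -- the four error families
  set A : Fin n → Vec p := fun i =>
    gF1 i xbar ybar - gF1 i (X i) (Y i) - (f12 i xbar ybar - f12 i (X i) (Y i)) vstar with hA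
  set C : Fin n → Vec p := fun i =>
    gF1 i xbar ystar - gF1 i xbar ybar - (f12 i xbar ystar - f12 i xbar ybar) vstar with hC
  set D1 : Fin n → Vec p := fun i => (f12 i (X i) (Y i)) (V i - vbar) with hD1
  set D2 : Fin n → Vec p := fun i => (f12 i (X i) (Y i)) (vbar - vstar) with hD2
  -- decomposition identity
  have hid : gradPhi xbar - dbar
      = (n:ℝ)⁻¹ • ∑ i, A i + (n:ℝ)⁻¹ • ∑ i, C i + (n:ℝ)⁻¹ • ∑ i, D1 i
        + (n:ℝ)⁻¹ • ∑ i, D2 i := by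
    rw [hhyper, hdbar, ← smul_sub, ← smul_sub, ← smul_add, ← smul_add, ← smul_add]
    congr 1
    rw [← Finset.sum_sub_distrib, ← Finset.sum_sub_distrib, ← Finset.sum_add_distrib,
      ← Finset.sum_add_distrib, ← Finset.sum_add_distrib]
    apply Finset.sum_congr rfl
    intro i _
    simp only [hA, hC, hD1, hD2, ContinuousLinearMap.sub_apply, map_sub]
    abel
  -- pointwise bounds
  have hAbound : ∀ i, ‖A i‖ ^ 2
      ≤ (LF1 + rv * Lf2) ^ 2 * (‖X i - xbar‖ ^ 2 + ‖Y i - ybar‖ ^ 2) := by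
    intro i
    have hF : ‖gF1 i xbar ybar - gF1 i (X i) (Y i)‖ ^ 2
        ≤ LF1 ^ 2 * (‖X i - xbar‖ ^ 2 + ‖Y i - ybar‖ ^ 2) := by
      have h := hgFlip i xbar ybar (X i) (Y i)
      rw [norm_sub_rev xbar (X i), norm_sub_rev ybar (Y i)] at h
      nlinarith [sq_nonneg ‖gF2 i xbar ybar - gF2 i (X i) (Y i)‖]
    have hT := hf12lip i xbar ybar (X i) (Y i)
    rw [norm_sub_rev xbar (X i), norm_sub_rev ybar (Y i)] at hT
    exact key_bound LF1 Lf2 rv hLF1 hLf2 hrv _ _ _ _ vstar hvstar_norm _ (by positivity) hF hT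
  have hCbound : ∀ i, ‖C i‖ ^ 2 ≤ (LF1 + rv * Lf2) ^ 2 * ‖ybar - ystar‖ ^ 2 := by
    intro i
    have hF : ‖gF1 i xbar ystar - gF1 i xbar ybar‖ ^ 2
        ≤ LF1 ^ 2 * (‖xbar - xbar‖ ^ 2 + ‖ystar - ybar‖ ^ 2) := by
      have h := hgFlip i xbar ystar xbar ybar
      nlinarith [sq_nonneg ‖gF2 i xbar ystar - gF2 i xbar ybar‖]
    have key := key_bound LF1 Lf2 rv hLF1 hLf2 hrv _ _ _ _ vstar hvstar_norm
      (‖xbar - xbar‖ ^ 2 + ‖ystar - ybar‖ ^ 2) (by positivity) hF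
      (hf12lip i xbar ystar xbar ybar)
    simpa [hC, norm_sub_rev ystar ybar] using key
  have hD1bound : ∀ i, ‖D1 i‖ ^ 2 ≤ Lf1 ^ 2 * ‖V i - vbar‖ ^ 2 := by
    intro i
    have h2 : ‖D1 i‖ ≤ Lf1 * ‖V i - vbar‖ :=
      ((f12 i (X i) (Y i)).le_opNorm (V i - vbar)).trans
        (mul_le_mul_of_nonneg_right (hop i (X i) (Y i)) (norm_nonneg _))
    calc ‖D1 i‖ ^ 2 ≤ (Lf1 * ‖V i - vbar‖) ^ 2 := pow_le_pow_left₀ (norm_nonneg _) h2 2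
      _ = Lf1 ^ 2 * ‖V i - vbar‖ ^ 2 := by ring
  have hD2bound : ∀ i, ‖D2 i‖ ^ 2 ≤ Lf1 ^ 2 * ‖vbar - vstar‖ ^ 2 := by
    intro i
    have h2 : ‖D2 i‖ ≤ Lf1 * ‖vbar - vstar‖ :=
      ((f12 i (X i) (Y i)).le_opNorm (vbar - vstar)).trans
        (mul_le_mul_of_nonneg_right (hop i (X i) (Y i)) (norm_nonneg _))
    calc ‖D2 i‖ ^ 2 ≤ (Lf1 * ‖vbar - vstar‖) ^ 2 := pow_le_pow_left₀ (norm_nonneg _) h2 2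
      _ = Lf1 ^ 2 * ‖vbar - vstar‖ ^ 2 := by ring
  -- averaged bounds
  have havg : ∀ (w : Fin n → Vec p) (c : ℝ), 0 ≤ c → (∀ i, ‖w i‖ ^ 2 ≤ c) →
      ‖(n:ℝ)⁻¹ • ∑ i, w i‖ ^ 2 ≤ c := by
    intro w c hc hw
    have h := (jensen_avg hn w).trans
      (mul_le_mul_of_nonneg_left (Finset.sum_le_sum fun i _ => hw i) (by positivity))
    simpa [Finset.sum_const, Finset.card_univ, nsmul_eq_mul, ← mul_assoc,
      inv_mul_cancel₀ hnne] using h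
  have hwA : ‖(n:ℝ)⁻¹ • ∑ i, A i‖ ^ 2
      ≤ (LF1 + rv * Lf2) ^ 2 * ((n:ℝ)⁻¹ * ∑ i, (‖X i - xbar‖ ^ 2 + ‖Y i - ybar‖ ^ 2)) := by
    calc ‖(n:ℝ)⁻¹ • ∑ i, A i‖ ^ 2 ≤ (n:ℝ)⁻¹ * ∑ i, ‖A i‖ ^ 2 := jensen_avg hn A
      _ ≤ (n:ℝ)⁻¹ * ∑ i, (LF1 + rv * Lf2) ^ 2 * (‖X i - xbar‖ ^ 2 + ‖Y i - ybar‖ ^ 2) :=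
          mul_le_mul_of_nonneg_left (Finset.sum_le_sum fun i _ => hAbound i) (by positivity)
      _ = (LF1 + rv * Lf2) ^ 2 * ((n:ℝ)⁻¹ * ∑ i, (‖X i - xbar‖ ^ 2 + ‖Y i - ybar‖ ^ 2)) := by
          rw [← Finset.mul_sum]; ring
  have hwC : ‖(n:ℝ)⁻¹ • ∑ i, C i‖ ^ 2 ≤ (LF1 + rv * Lf2) ^ 2 * ‖ybar - ystar‖ ^ 2 :=
    havg C _ (by positivity) hCbound
  have hwD1 : ‖(n:ℝ)⁻¹ • ∑ i, D1 i‖ ^ 2 ≤ Lf1 ^ 2 * ((n:ℝ)⁻¹ * ∑ i, ‖V i - vbar‖ ^ 2) := by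
    calc ‖(n:ℝ)⁻¹ • ∑ i, D1 i‖ ^ 2 ≤ (n:ℝ)⁻¹ * ∑ i, ‖D1 i‖ ^ 2 := jensen_avg hn D1
      _ ≤ (n:ℝ)⁻¹ * ∑ i, Lf1 ^ 2 * ‖V i - vbar‖ ^ 2 :=
          mul_le_mul_of_nonneg_left (Finset.sum_le_sum fun i _ => hD1bound i) (by positivity)
      _ = Lf1 ^ 2 * ((n:ℝ)⁻¹ * ∑ i, ‖V i - vbar‖ ^ 2) := by rw [← Finset.mul_sum]; ring
  have hwD2 : ‖(n:ℝ)⁻¹ • ∑ i, D2 i‖ ^ 2 ≤ Lf1 ^ 2 * ‖vbar - vstar‖ ^ 2 :=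
    havg D2 _ (by positivity) hD2bound
  -- combine: ‖∇Φ(x̄) − d̄‖² ≤ 5 (S1 + S2 + S3 + S4)
  have hS1 : (0:ℝ) ≤ Lf1 ^ 2 * ‖vbar - vstar‖ ^ 2 := by positivity
  have hS2 : (0:ℝ) ≤ (LF1 + rv * Lf2) ^ 2 * ‖ybar - ystar‖ ^ 2 := by positivity
  have hS3 : (0:ℝ) ≤ Lf1 ^ 2 * ((n:ℝ)⁻¹ * ∑ i, ‖V i - vbar‖ ^ 2) := by positivity
  have hS4 : (0:ℝ) ≤ (LF1 + rv * Lf2) ^ 2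
      * ((n:ℝ)⁻¹ * ∑ i, (‖X i - xbar‖ ^ 2 + ‖Y i - ybar‖ ^ 2)) := by positivity
  have hnorm : ‖gradPhi xbar - dbar‖ ^ 2
      ≤ 5 * (Lf1 ^ 2 * ‖vbar - vstar‖ ^ 2
        + (LF1 + rv * Lf2) ^ 2 * ‖ybar - ystar‖ ^ 2
        + Lf1 ^ 2 * ((n:ℝ)⁻¹ * ∑ i, ‖V i - vbar‖ ^ 2)
        + (LF1 + rv * Lf2) ^ 2
            * ((n:ℝ)⁻¹ * ∑ i, (‖X i - xbar‖ ^ 2 + ‖Y i - ybar‖ ^ 2))) := by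
    rw [hid]
    set wA := (n:ℝ)⁻¹ • ∑ i, A i
    set wC := (n:ℝ)⁻¹ • ∑ i, C i
    set wD1 := (n:ℝ)⁻¹ • ∑ i, D1 i
    set wD2 := (n:ℝ)⁻¹ • ∑ i, D2 i
    have ht : ‖wA + wC + wD1 + wD2‖ ≤ ‖wA‖ + ‖wC‖ + ‖wD1‖ + ‖wD2‖ := by
      calc ‖wA + wC + wD1 + wD2‖ ≤ ‖wA + wC + wD1‖ + ‖wD2‖ := norm_add_le _ _
        _ ≤ ‖wA + wC‖ + ‖wD1‖ + ‖wD2‖ := by linarith [norm_add_le (wA + wC) wD1]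
        _ ≤ ‖wA‖ + ‖wC‖ + ‖wD1‖ + ‖wD2‖ := by linarith [norm_add_le wA wC]
    have step1 : ‖wA + wC + wD1 + wD2‖ ^ 2 ≤ (‖wA‖ + ‖wC‖ + ‖wD1‖ + ‖wD2‖) ^ 2 :=
      pow_le_pow_left₀ (norm_nonneg _) ht 2
    have step2 : (‖wA‖ + ‖wC‖ + ‖wD1‖ + ‖wD2‖) ^ 2
        ≤ 4 * (‖wA‖ ^ 2 + ‖wC‖ ^ 2 + ‖wD1‖ ^ 2 + ‖wD2‖ ^ 2) := by
      nlinarith [sq_nonneg (‖wA‖ - ‖wC‖), sq_nonneg (‖wA‖ - ‖wD1‖), sq_nonneg (‖wA‖ - ‖wD2‖),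
        sq_nonneg (‖wC‖ - ‖wD1‖), sq_nonneg (‖wC‖ - ‖wD2‖), sq_nonneg (‖wD1‖ - ‖wD2‖)]
    linarith [hwA, hwC, hwD1, hwD2]
  -- descent lemma
  have hdesc := descent_lemma LΦ hLΦ Φ gradPhi hΦ hΦlip xbar xplus
  have hsub : xplus - xbar = (-α) • dbar := by
    rw [hxplus, neg_smul]; abel
  have hinner : (inner ℝ (gradPhi xbar) (xplus - xbar) : ℝ)
      = -α * (inner ℝ (gradPhi xbar) dbar : ℝ) := by
    rw [hsub, real_inner_smul_right]
  have hnd : ‖xplus - xbar‖ ^ 2 = α ^ 2 * ‖dbar‖ ^ 2 := by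
    rw [hsub, norm_smul, Real.norm_eq_abs, abs_neg, abs_of_pos hα, mul_pow]
  have hsq' : α / 2 * ‖gradPhi xbar - dbar‖ ^ 2
      = α / 2 * ‖gradPhi xbar‖ ^ 2 - α * (inner ℝ (gradPhi xbar) dbar : ℝ)
        + α / 2 * ‖dbar‖ ^ 2 := by
    rw [norm_sub_sq_real]; ring
  have hN' : 1 / (2 * α) * ‖xplus - xbar‖ ^ 2 = α / 2 * ‖dbar‖ ^ 2 := by
    rw [hnd]; field_simp
  have h4' : α / 2 * ‖gradPhi xbar - dbar‖ ^ 2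
      ≤ 5 * α * Lf1 ^ 2 / 2 * ‖vbar - vstar‖ ^ 2
        + 5 * α * (LF1 + Lf2 * rv) ^ 2 / 2 * ‖ybar - ystar‖ ^ 2
        + 5 * α * Lf1 ^ 2 / (2 * n) * ∑ i, ‖V i - vbar‖ ^ 2
        + 5 * α * (LF1 + rv * Lf2) ^ 2 / (2 * n)
            * ∑ i, (‖X i - xbar‖ ^ 2 + ‖Y i - ybar‖ ^ 2) := by
    calc α / 2 * ‖gradPhi xbar - dbar‖ ^ 2
        ≤ α / 2 * (5 * (Lf1 ^ 2 * ‖vbar - vstar‖ ^ 2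
            + (LF1 + rv * Lf2) ^ 2 * ‖ybar - ystar‖ ^ 2
            + Lf1 ^ 2 * ((n:ℝ)⁻¹ * ∑ i, ‖V i - vbar‖ ^ 2)
            + (LF1 + rv * Lf2) ^ 2
                * ((n:ℝ)⁻¹ * ∑ i, (‖X i - xbar‖ ^ 2 + ‖Y i - ybar‖ ^ 2)))) :=
          mul_le_mul_of_nonneg_left hnorm (by positivity)
      _ = _ := by field_simp
  have e2 : -(1 / 2) * (1 / α - LΦ) * ‖xplus - xbar‖ ^ 2
      = -(α / 2 * ‖dbar‖ ^ 2) + LΦ / 2 * ‖xplus - xbar‖ ^ 2 := by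
    rw [← hN']; field_simp; ring
  linarith [hdesc, hinner, hsq', h4', e2]
end
end

section
/- For each i = 1, …, n, let f_i : ℝ^p × ℝ^q → ℝ have L_{f,1}-Lipschitz gradient, set f := (1/n)Σ f_i, and suppose f(x̄, ·) is σ-strongly convex (σ > 0) for the given x̄ ∈ ℝ^p, with y* ∈ ℝ^q satisfying ∇₂f(x̄, y*) = 0. Let (x_i, y_i) be points with x̄ = (1/n)Σ x_i and ȳ := (1/n)Σ y_i, let 0 < β ≤ 2/(σ + L_{f,1}) with βσ ≤ 1, and set ȳ⁺ := ȳ − β·(1/n)Σ_{i=1}^n ∇₂f_i(x_i, y_i). Then ‖ȳ⁺ − y*‖² ≤ (1 − βσ/2)‖ȳ − y*‖² + (3βL_{f,1}²/(nσ)) Σ_{i=1}^n (‖x̄ − x_i‖² + ‖ȳ − y_i‖²). -/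
noncomputable section

open Finset
open scoped RealInnerProductSpace

set_option linter.unusedSectionVars false
set_option maxHeartbeats 4000000

open Finset
open scoped RealInnerProductSpace

section AuxA
variable {E : Type*} [NormedAddCommGroup E] [InnerProductSpace ℝ E] [CompleteSpace E]

lemma aux_hasDerivAt_line {φ : E → ℝ} {G : E → E} (hG : ∀ u, HasGradientAt φ (G u) u)
    (y d : E) (t : ℝ) :
    HasDerivAt (fun s : ℝ => φ (y + s • d)) ⟪G (y + t • d), d⟫ t := by
  have hc : HasDerivAt (fun s : ℝ => y + s • d) d t := by
    simpa using ((hasDerivAt_id t).smul_const d).const_add y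
  have h2 := ((hG (y + t • d)).hasFDerivAt).comp_hasDerivAt t hc
  simpa [InnerProductSpace.toDual_apply_apply, Function.comp_def] using h2

/-- Subgradient inequality for a convex differentiable function. -/
lemma aux_convex_lower {φ : E → ℝ} {G : E → E} (hG : ∀ u, HasGradientAt φ (G u) u)
    (hconv : ConvexOn ℝ Set.univ φ) (y z : E) :
    φ y + ⟪G y, z - y⟫ ≤ φ z := by
  have hψ : ConvexOn ℝ Set.univ fun t : ℝ => φ (y + t • (z - y)) := by
    have := hconv.comp_affineMap (AffineMap.lineMap y z)
    simpa [AffineMap.lineMap_apply, Function.comp_def, add_comm] using this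
  have hslope := hψ.le_slope_of_hasDerivAt (Set.mem_univ (0:ℝ)) (Set.mem_univ 1) one_pos
      (by simpa using aux_hasDerivAt_line hG y (z - y) 0)
  simp only [slope_def_field, zero_smul, add_zero, one_smul, div_one] at hslope
  have h1 : y + (z - y) = z := by abel
  rw [h1] at hslope
  simp only [slope, sub_zero, inv_one, one_smul] at hslope ⊢
  linarith [hslope]

/-- Descent lemma from a Lipschitz gradient. -/
lemma aux_descent {φ : E → ℝ} {G : E → E} {M : ℝ} (hM : 0 ≤ M)
    (hG : ∀ u, HasGradientAt φ (G u) u)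
    (hL : ∀ u v, ‖G u - G v‖ ≤ M * ‖u - v‖) (y z : E) :
    φ z ≤ φ y + ⟪G y, z - y⟫ + M / 2 * ‖z - y‖ ^ 2 := by
  set d := z - y with hd
  have hGc : Continuous G := by
    refine (LipschitzWith.of_dist_le_mul (K := ⟨M, hM⟩) fun u v => ?_).continuous
    rw [dist_eq_norm, dist_eq_norm]
    exact hL u v
  have hcont : Continuous fun t : ℝ => ⟪G (y + t • d), d⟫ := by
    exact (hGc.comp (by continuity)).inner continuous_const
  have hFTC : φ (y + (1:ℝ) • d) - φ (y + (0:ℝ) • d)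
      = ∫ t in (0:ℝ)..1, ⟪G (y + t • d), d⟫ :=
    (intervalIntegral.integral_eq_sub_of_hasDerivAt
      (fun t _ => aux_hasDerivAt_line hG y d t) (hcont.intervalIntegrable 0 1)).symm
  have hcont2 : Continuous fun t : ℝ => ⟪G y, d⟫ + M * ‖d‖ ^ 2 * t := by continuity
  have hmono : (∫ t in (0:ℝ)..1, ⟪G (y + t • d), d⟫)
      ≤ ∫ t in (0:ℝ)..1, (⟪G y, d⟫ + M * ‖d‖ ^ 2 * t) := by
    apply intervalIntegral.integral_mono_on (by norm_num)
      (hcont.intervalIntegrable 0 1) (hcont2.intervalIntegrable 0 1)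
    intro t ht
    rcases ht with ⟨ht0, _⟩
    have hsplit : ⟪G (y + t • d), d⟫ = ⟪G y, d⟫ + ⟪G (y + t • d) - G y, d⟫ := by
      rw [inner_sub_left]; ring
    have hcs : ⟪G (y + t • d) - G y, d⟫ ≤ ‖G (y + t • d) - G y‖ * ‖d‖ :=
      real_inner_le_norm _ _
    have hlip : ‖G (y + t • d) - G y‖ ≤ M * (t * ‖d‖) := by
      have := hL (y + t • d) y
      simpa [norm_smul, abs_of_nonneg ht0, mul_assoc] using this
    have hnd : (0:ℝ) ≤ ‖d‖ := norm_nonneg _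
    nlinarith [mul_le_mul_of_nonneg_right hlip hnd]
  have hval : (∫ t in (0:ℝ)..1, (⟪G y, d⟫ + M * ‖d‖ ^ 2 * t))
      = ⟪G y, d⟫ + M / 2 * ‖d‖ ^ 2 := by
    have hii : IntervalIntegrable (fun t : ℝ => M * ‖d‖ ^ 2 * t) MeasureTheory.volume 0 1 :=
      (by continuity : Continuous fun t : ℝ => M * ‖d‖ ^ 2 * t).intervalIntegrable 0 1
    rw [intervalIntegral.integral_add intervalIntegrable_const hii,
      intervalIntegral.integral_const_mul]
    simp [integral_id]
    ring
  have h0 : y + (0:ℝ) • d = y := by simp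
  have h1 : y + (1:ℝ) • d = z := by simp [hd]
  rw [h0, h1] at hFTC
  linarith [hFTC, hmono, hval.le, hval.ge]

/-- Cocoercivity from convexity + descent inequality. -/
lemma aux_cocoercive {φ : E → ℝ} {G : E → E} {M : ℝ} (hM : 0 ≤ M)
    (hlow : ∀ y z, φ y + ⟪G y, z - y⟫ ≤ φ z)
    (hdesc : ∀ y z, φ z ≤ φ y + ⟪G y, z - y⟫ + M / 2 * ‖z - y‖ ^ 2) (y z : E) :
    ‖G y - G z‖ ^ 2 ≤ M * ⟪G y - G z, y - z⟫ := by
  have key : ∀ t : ℝ, (2 * t - M * t ^ 2) * ‖G y - G z‖ ^ 2 ≤ ⟪G y - G z, y - z⟫ := by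
    intro t
    set Δ := G z - G y with hΔ
    have e1 : ∀ (u w : E), φ u + ⟪G u, (w - t • Δ) - u⟫
        = φ u + ⟪G u, w - u⟫ - t * ⟪G u, Δ⟫ := by
      intro u w
      have : (w - t • Δ) - u = (w - u) - t • Δ := by abel
      rw [this, inner_sub_right, real_inner_smul_right]; ring
    have h1 := hlow y (z - t • Δ)
    have h2 := hdesc z (z - t • Δ)
    have h1' := hlow z (y + t • Δ)
    have h2' := hdesc y (y + t • Δ)
    rw [e1 y z] at h1
    have e2 : (z - t • Δ) - z = -(t • Δ) := by abel
    have e2' : (y + t • Δ) - y = t • Δ := by abel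
    have enorm : ‖-(t • Δ)‖ ^ 2 = t ^ 2 * ‖Δ‖ ^ 2 := by
      rw [norm_neg, norm_smul]; simp [mul_pow, sq_abs]
    have enorm' : ‖t • Δ‖ ^ 2 = t ^ 2 * ‖Δ‖ ^ 2 := by
      rw [norm_smul]; simp [mul_pow, sq_abs]
    rw [e2] at h2
    rw [e2'] at h2'
    rw [enorm] at h2
    rw [enorm'] at h2'
    rw [inner_neg_right, real_inner_smul_right] at h2
    rw [real_inner_smul_right] at h2'
    have e3 : (y + t • Δ) - z = (y - z) + t • Δ := by abel
    rw [e3, inner_add_right, real_inner_smul_right] at h1'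
    have e4 : ⟪G z, Δ⟫ - ⟪G y, Δ⟫ = ‖Δ‖ ^ 2 := by
      rw [← inner_sub_left, ← hΔ, real_inner_self_eq_norm_sq]
    have he4t : t * ⟪G z, Δ⟫ - t * ⟪G y, Δ⟫ = t * ‖Δ‖ ^ 2 := by
      rw [← mul_sub, e4]
    have e6 : ⟪G y, z - y⟫ + ⟪G y, y - z⟫ = 0 := by
      rw [← inner_add_right]; simp
    have e6' : ⟪G z, z - y⟫ + ⟪G z, y - z⟫ = 0 := by
      rw [← inner_add_right]; simp
    have einner : ⟪G y - G z, y - z⟫ = ⟪G y, y - z⟫ - ⟪G z, y - z⟫ :=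
      inner_sub_left _ _ _
    have e7 : ‖G y - G z‖ = ‖Δ‖ := by rw [hΔ, ← norm_neg]; congr 1; abel
    rw [e7, einner]
    nlinarith [h1, h2, h1', h2', he4t, e6, e6']
  rcases eq_or_lt_of_le hM with hM0 | hM0
  · have key' : ∀ t : ℝ, 2 * t * ‖G y - G z‖ ^ 2 ≤ ⟪G y - G z, y - z⟫ := by
      intro t
      have := key t
      rw [← hM0] at this
      simpa using this
    rw [← hM0, zero_mul]
    by_contra hcon
    push_neg at hcon
    have hb : (0:ℝ) < ‖G y - G z‖ ^ 2 := hcon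
    have hkey := key' ((⟪G y - G z, y - z⟫ + 1) / (2 * ‖G y - G z‖ ^ 2))
    have heq : 2 * ((⟪G y - G z, y - z⟫ + 1) / (2 * ‖G y - G z‖ ^ 2)) * ‖G y - G z‖ ^ 2
        = ⟪G y - G z, y - z⟫ + 1 := by
      have hne : ‖G y - G z‖ ≠ 0 := fun h => by simp [h] at hb
      field_simp
    linarith
  · have := key M⁻¹
    have hM' : M ≠ 0 := ne_of_gt hM0
    have he : 2 * M⁻¹ - M * (M⁻¹) ^ 2 = M⁻¹ := by field_simp; ring
    rw [he] at this
    calc ‖G y - G z‖ ^ 2 = M * (M⁻¹ * ‖G y - G z‖ ^ 2) := by field_simp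
    _ ≤ M * ⟪G y - G z, y - z⟫ := by
        apply mul_le_mul_of_nonneg_left this hM



variable {E : Type*} [NormedAddCommGroup E] [InnerProductSpace ℝ E] [CompleteSpace E]

lemma aux_hasGradientAt_normSq (y : E) :
    HasGradientAt (fun u : E => ‖u‖ ^ 2) ((2:ℝ) • y) y := by
  have h1 : HasFDerivAt (fun u : E => ⟪u, u⟫)
      ((fderivInnerCLM ℝ (y, y)).comp
        ((ContinuousLinearMap.id ℝ E).prod (ContinuousLinearMap.id ℝ E))) y :=
    (hasFDerivAt_id y).inner ℝ (hasFDerivAt_id y)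
  have h2 : HasFDerivAt (fun u : E => ‖u‖ ^ 2)
      ((fderivInnerCLM ℝ (y, y)).comp
        ((ContinuousLinearMap.id ℝ E).prod (ContinuousLinearMap.id ℝ E))) y := by
    simpa only [real_inner_self_eq_norm_sq] using h1
  rw [hasGradientAt_iff_hasFDerivAt]
  refine h2.congr_fderiv ?_
  apply ContinuousLinearMap.ext
  intro v
  simp [InnerProductSpace.toDual_apply_apply, fderivInnerCLM_apply, real_inner_smul_left,
    real_inner_comm]
  ring

lemma aux_young (u v : E) {t : ℝ} (ht : 0 < t) :
    ‖u - v‖ ^ 2 ≤ (1 + t) * ‖u‖ ^ 2 + (1 + t⁻¹) * ‖v‖ ^ 2 := by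
  have hexp : ‖u - v‖ ^ 2 = ‖u‖ ^ 2 - 2 * ⟪u, v⟫ + ‖v‖ ^ 2 := norm_sub_sq_real u v
  have hcs : -⟪u, v⟫ ≤ ‖u‖ * ‖v‖ := by
    have := abs_real_inner_le_norm u v
    cases abs_cases (⟪u, v⟫ : ℝ) with
    | inl h => linarith [real_inner_le_norm u v]
    | inr h => linarith
  have h1 : 2 * (‖u‖ * ‖v‖) ≤ t * ‖u‖ ^ 2 + t⁻¹ * ‖v‖ ^ 2 := by
    have h2 : (0:ℝ) ≤ t⁻¹ * ((t * ‖u‖ - ‖v‖) ^ 2) :=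
      mul_nonneg (inv_pos.2 ht).le (sq_nonneg _)
    have h3 : t⁻¹ * ((t * ‖u‖ - ‖v‖) ^ 2) = t * ‖u‖ ^ 2 + t⁻¹ * ‖v‖ ^ 2 - 2 * (‖u‖ * ‖v‖) := by
      field_simp
      ring
    linarith [h3 ▸ h2]
  nlinarith [hexp, hcs, h1]



end AuxA

/-- One-step contraction for the average lower-level iterate:
if `f = (1/n) ∑ fᵢ`, each `∇fᵢ` is `L_{f,1}`-Lipschitz, `f(x̄, ·)` is `σ`-strongly
convex, `∇₂f(x̄, y*) = 0`, `0 < β ≤ 2/(σ + L_{f,1})`, `βσ ≤ 1`, and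
`ȳ⁺ = ȳ − β (1/n) ∑ᵢ ∇₂fᵢ(xᵢ, yᵢ)`, then
`‖ȳ⁺ − y*‖² ≤ (1 − βσ/2) ‖ȳ − y*‖² + (3βL_{f,1}²/(nσ)) ∑ᵢ (‖x̄ − xᵢ‖² + ‖ȳ − yᵢ‖²)`. -/
theorem ybar_contraction {n p q : ℕ} (hn : 0 < n)
    (σ Lf1 β : ℝ) (hσ : 0 < σ) (hLf1 : 0 ≤ Lf1)
    (hβ0 : 0 < β) (hβ : β ≤ 2 / (σ + Lf1)) (hβσ : β * σ ≤ 1)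
    (f : Fin n → Vec p → Vec q → ℝ)
    (g1 : Fin n → Vec p → Vec q → Vec p) (g2 : Fin n → Vec p → Vec q → Vec q)
    -- `g1, g2` are the partial gradients of `f i`
    (hg1 : ∀ i x y, HasGradientAt (fun x' => f i x' y) (g1 i x y) x)
    (hg2 : ∀ i x y, HasGradientAt (fun y' => f i x y') (g2 i x y) y)
    -- `∇fᵢ` is `L_{f,1}`-Lipschitz
    (hglip : ∀ i x y x' y',
      ‖g1 i x y - g1 i x' y'‖ ^ 2 + ‖g2 i x y - g2 i x' y'‖ ^ 2
        ≤ Lf1 ^ 2 * (‖x - x'‖ ^ 2 + ‖y - y'‖ ^ 2))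
    (X : Fin n → Vec p) (Y : Fin n → Vec q)
    (xbar : Vec p) (hxbar : xbar = (n : ℝ)⁻¹ • ∑ i, X i)
    (ybar : Vec q) (hybar : ybar = (n : ℝ)⁻¹ • ∑ i, Y i)
    -- `f(x̄, ·)` is `σ`-strongly convex, i.e. `f(x̄, ·) − (σ/2)‖·‖²` is convex
    (hsc : ConvexOn ℝ Set.univ
      (fun y : Vec q => (n : ℝ)⁻¹ * ∑ i, f i xbar y - σ / 2 * ‖y‖ ^ 2))
    -- `y*` satisfies `∇₂f(x̄, y*) = 0`
    (ystar : Vec q) (hystar : (n : ℝ)⁻¹ • ∑ i, g2 i xbar ystar = 0)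
    (yplus : Vec q)
    (hyplus : yplus = ybar - β • ((n : ℝ)⁻¹ • ∑ i, g2 i (X i) (Y i))) :
    ‖yplus - ystar‖ ^ 2
      ≤ (1 - β * σ / 2) * ‖ybar - ystar‖ ^ 2
        + 3 * β * Lf1 ^ 2 / (n * σ) * ∑ i, (‖xbar - X i‖ ^ 2 + ‖ybar - Y i‖ ^ 2) := by
  have hn0 : (0:ℝ) < (n:ℝ) := by exact_mod_cast hn
  have hninv : (0:ℝ) < (n:ℝ)⁻¹ := inv_pos.2 hn0
  -- the averaged lower-level function and its gradient
  set G : Vec q → Vec q := fun y => (n:ℝ)⁻¹ • ∑ i, g2 i xbar y with hGdef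
  have hGgrad : ∀ y, HasGradientAt (fun y : Vec q => (n:ℝ)⁻¹ * ∑ i, f i xbar y) (G y) y := by
    intro y
    have hsum : HasFDerivAt (fun y : Vec q => ∑ i, f i xbar y)
        (∑ i, (InnerProductSpace.toDual ℝ (Vec q)) (g2 i xbar y)) y :=
      HasFDerivAt.fun_sum fun i _ => (hg2 i xbar y).hasFDerivAt
    have h2 := hsum.const_mul ((n:ℝ)⁻¹)
    rw [hasGradientAt_iff_hasFDerivAt]
    refine h2.congr_fderiv ?_
    simp only [hGdef, map_smul, map_sum]
  set L : ℝ := max Lf1 σ with hLdef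
  have hσL : σ ≤ L := le_max_right _ _
  have hL0 : (0:ℝ) < L := lt_of_lt_of_le hσ hσL
  have hLf1L : Lf1 ≤ L := le_max_left _ _
  have hβL : β * (σ + L) ≤ 2 := by
    rcases max_cases Lf1 σ with ⟨h1, h2⟩ | ⟨h1, h2⟩ <;> rw [hLdef, h1]
    · have hpos : 0 < σ + Lf1 := by linarith
      rw [le_div_iff₀ hpos] at hβ
      linarith
    · nlinarith [hβσ]
  -- Lipschitz bound for g2 in y
  have hg2lip : ∀ i (x : Vec p) (y y' : Vec q),
      ‖g2 i x y - g2 i x y'‖ ≤ Lf1 * ‖y - y'‖ := by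
    intro i x y y'
    have hg := hglip i x y x y'
    have h1 : (0:ℝ) ≤ ‖g1 i x y - g1 i x y'‖ ^ 2 := sq_nonneg _
    have h2 : ‖g2 i x y - g2 i x y'‖ ^ 2 ≤ Lf1 ^ 2 * ‖y - y'‖ ^ 2 := by
      have hx : ‖x - x‖ = 0 := by simp
      rw [hx] at hg
      nlinarith [hg]
    calc ‖g2 i x y - g2 i x y'‖ = Real.sqrt (‖g2 i x y - g2 i x y'‖ ^ 2) :=
          (Real.sqrt_sq (norm_nonneg _)).symm
    _ ≤ Real.sqrt ((Lf1 * ‖y - y'‖) ^ 2) := Real.sqrt_le_sqrt (by rw [mul_pow]; exact h2)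
    _ = Lf1 * ‖y - y'‖ := Real.sqrt_sq (by positivity)
  -- Lipschitz bound for G
  have hGlip : ∀ y z, ‖G y - G z‖ ≤ L * ‖y - z‖ := by
    intro y z
    have h1 : G y - G z = (n:ℝ)⁻¹ • ∑ i, (g2 i xbar y - g2 i xbar z) := by
      simp only [hGdef]
      rw [Finset.sum_sub_distrib, smul_sub]
    have h2 : ‖∑ i, (g2 i xbar y - g2 i xbar z)‖ ≤ (n:ℝ) * (Lf1 * ‖y - z‖) := by
      refine (norm_sum_le _ _).trans ?_
      have := Finset.sum_le_sum (fun i (_ : i ∈ (univ : Finset (Fin n))) => hg2lip i xbar y z)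
      rw [Finset.sum_const, card_univ, Fintype.card_fin, nsmul_eq_mul] at this
      exact this
    rw [h1, norm_smul, Real.norm_eq_abs, abs_of_pos hninv]
    have h3 : (n:ℝ)⁻¹ * ‖∑ i, (g2 i xbar y - g2 i xbar z)‖
        ≤ (n:ℝ)⁻¹ * ((n:ℝ) * (Lf1 * ‖y - z‖)) :=
      mul_le_mul_of_nonneg_left h2 hninv.le
    have h4 : (n:ℝ)⁻¹ * ((n:ℝ) * (Lf1 * ‖y - z‖)) = Lf1 * ‖y - z‖ := by
      field_simp
    rw [h4] at h3
    exact h3.trans (mul_le_mul_of_nonneg_right hLf1L (norm_nonneg _))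
  -- strongly convex part φ and its gradient
  set Gφ : Vec q → Vec q := fun y => G y - σ • y with hGφdef
  have hφgrad : ∀ y, HasGradientAt
      (fun y : Vec q => (n:ℝ)⁻¹ * ∑ i, f i xbar y - σ / 2 * ‖y‖ ^ 2) (Gφ y) y := by
    intro y
    have hsq : HasFDerivAt (fun u : Vec q => σ / 2 * ‖u‖ ^ 2)
        ((σ / 2) • (InnerProductSpace.toDual ℝ (Vec q)) ((2:ℝ) • y)) y :=
      ((aux_hasGradientAt_normSq y).hasFDerivAt).const_mul (σ / 2)
    have hsub := (hGgrad y).hasFDerivAt.sub hsq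
    rw [hasGradientAt_iff_hasFDerivAt]
    refine hsub.congr_fderiv ?_
    apply ContinuousLinearMap.ext
    intro v
    simp only [hGφdef, ContinuousLinearMap.sub_apply, ContinuousLinearMap.smul_apply,
      InnerProductSpace.toDual_apply_apply, inner_sub_left, real_inner_smul_left, smul_eq_mul]
    ring
  have hφconv : ConvexOn ℝ Set.univ
      (fun y : Vec q => (n:ℝ)⁻¹ * ∑ i, f i xbar y - σ / 2 * ‖y‖ ^ 2) := hsc
  have hlow := aux_convex_lower hφgrad hφconv
  have hdesc_h := aux_descent hL0.le hGgrad hGlip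
  have hdesc_φ : ∀ y z, ((n:ℝ)⁻¹ * ∑ i, f i xbar z - σ / 2 * ‖z‖ ^ 2)
      ≤ ((n:ℝ)⁻¹ * ∑ i, f i xbar y - σ / 2 * ‖y‖ ^ 2) + ⟪Gφ y, z - y⟫
        + (L - σ) / 2 * ‖z - y‖ ^ 2 := by
    intro y z
    have hd := hdesc_h y z
    have hid : ‖z‖ ^ 2 = ‖y‖ ^ 2 + 2 * ⟪y, z - y⟫ + ‖z - y‖ ^ 2 := by
      have h := norm_add_sq_real y (z - y)
      rw [add_sub_cancel] at h
      exact h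
    have hGφy : ⟪Gφ y, z - y⟫ = ⟪G y, z - y⟫ - σ * ⟪y, z - y⟫ := by
      simp only [hGφdef, inner_sub_left, real_inner_smul_left]
    rw [hGφy]
    have hidσ : σ / 2 * ‖z‖ ^ 2
        = σ / 2 * (‖y‖ ^ 2 + 2 * ⟪y, z - y⟫ + ‖z - y‖ ^ 2) := by rw [← hid]
    nlinarith [hd, hidσ]
  have hcoco := aux_cocoercive (by linarith : (0:ℝ) ≤ L - σ)
    (fun y z => hlow y z) (fun y z => hdesc_φ y z) ybar ystar
  have hGystar : G ystar = 0 := hystar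
  -- scalars
  set a : ℝ := ‖ybar - ystar‖ ^ 2 with hadef
  set b : ℝ := ‖G ybar - G ystar‖ ^ 2 with hbdef
  set c : ℝ := ⟪G ybar - G ystar, ybar - ystar⟫ with hcdef
  have ha0 : 0 ≤ a := by positivity
  have hb0 : 0 ≤ b := by positivity
  -- the key interpolation inequality
  have hGφdiff : Gφ ybar - Gφ ystar = (G ybar - G ystar) - σ • (ybar - ystar) := by
    simp only [hGφdef, smul_sub]
    abel
  have hnorm1 : ‖(G ybar - G ystar) - σ • (ybar - ystar)‖ ^ 2
      = b - 2 * σ * c + σ ^ 2 * a := by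
    rw [norm_sub_sq_real, real_inner_smul_right, norm_smul]
    simp only [Real.norm_eq_abs, mul_pow, sq_abs, hadef, hbdef, hcdef]
    ring
  have hinner1 : ⟪(G ybar - G ystar) - σ • (ybar - ystar), ybar - ystar⟫ = c - σ * a := by
    rw [inner_sub_left, real_inner_smul_left, real_inner_self_eq_norm_sq]
  have hKey : b + σ * L * a ≤ (σ + L) * c := by
    rw [hGφdiff, hnorm1, hinner1] at hcoco
    nlinarith [hcoco]
  -- the ideal contraction
  have hu : ‖(ybar - ystar) - β • (G ybar - G ystar)‖ ^ 2 = a - 2 * β * c + β ^ 2 * b := by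
    rw [norm_sub_sq_real, real_inner_smul_right, norm_smul]
    simp only [Real.norm_eq_abs, mul_pow, sq_abs]
    rw [real_inner_comm]
    simp only [hadef, hbdef, hcdef]
    ring
  have hcontr : a - 2 * β * c + β ^ 2 * b ≤ (1 - β * σ) * a := by
    have hstep : (σ + L) * (β * σ * a + β ^ 2 * b) ≤ (σ + L) * (2 * β * c) := by
      nlinarith [mul_le_mul_of_nonneg_left hKey hβ0.le,
        mul_nonneg (mul_nonneg hβ0.le hb0) (sub_nonneg.2 hβL),
        mul_nonneg (mul_nonneg (mul_nonneg hβ0.le hσ.le) ha0) (sub_nonneg.2 hσL)]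
    have h5 := (mul_le_mul_iff_right₀ (by linarith : (0:ℝ) < σ + L)).1 hstep
    linarith
  -- the error term
  set e : Vec q := ((n:ℝ)⁻¹ • ∑ i, g2 i (X i) (Y i)) - G ybar with hedef
  have hsplit : yplus - ystar = ((ybar - ystar) - β • (G ybar - G ystar)) - β • e := by
    have hXe : ((n:ℝ)⁻¹ • ∑ i, g2 i (X i) (Y i)) = G ybar + e := by
      rw [hedef]; abel
    rw [hyplus, hXe, hGystar, sub_zero, smul_add]
    abel
  set S : ℝ := ∑ i, (‖xbar - X i‖ ^ 2 + ‖ybar - Y i‖ ^ 2) with hSdef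
  have hS0 : 0 ≤ S := by
    rw [hSdef]
    exact Finset.sum_nonneg fun i _ => by positivity
  have herr2 : ‖e‖ ^ 2 ≤ Lf1 ^ 2 / n * S := by
    have he2 : e = (n:ℝ)⁻¹ • ∑ i, (g2 i (X i) (Y i) - g2 i xbar ybar) := by
      simp only [hedef, hGdef]
      rw [Finset.sum_sub_distrib, smul_sub]
    have hn1 : ‖e‖ ≤ (n:ℝ)⁻¹ * ∑ i, ‖g2 i (X i) (Y i) - g2 i xbar ybar‖ := by
      rw [he2, norm_smul, Real.norm_eq_abs, abs_of_pos hninv]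
      exact mul_le_mul_of_nonneg_left (norm_sum_le _ _) hninv.le
    have hsq : (∑ i, ‖g2 i (X i) (Y i) - g2 i xbar ybar‖) ^ 2
        ≤ (n:ℝ) * ∑ i, ‖g2 i (X i) (Y i) - g2 i xbar ybar‖ ^ 2 := by
      have := sq_sum_le_card_mul_sum_sq (s := (univ : Finset (Fin n)))
        (f := fun i => ‖g2 i (X i) (Y i) - g2 i xbar ybar‖)
      simpa using this
    have hterm : ∀ i, ‖g2 i (X i) (Y i) - g2 i xbar ybar‖ ^ 2
        ≤ Lf1 ^ 2 * (‖xbar - X i‖ ^ 2 + ‖ybar - Y i‖ ^ 2) := by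
      intro i
      have hg := hglip i (X i) (Y i) xbar ybar
      have h1 : (0:ℝ) ≤ ‖g1 i (X i) (Y i) - g1 i xbar ybar‖ ^ 2 := sq_nonneg _
      rw [norm_sub_rev (X i) xbar, norm_sub_rev (Y i) ybar] at hg
      linarith
    have hsum_t : ∑ i, ‖g2 i (X i) (Y i) - g2 i xbar ybar‖ ^ 2 ≤ Lf1 ^ 2 * S := by
      rw [hSdef, Finset.mul_sum]
      exact Finset.sum_le_sum fun i _ => hterm i
    have he0 : (0:ℝ) ≤ ‖e‖ := norm_nonneg _
    calc ‖e‖ ^ 2 ≤ ((n:ℝ)⁻¹) ^ 2 * (∑ i, ‖g2 i (X i) (Y i) - g2 i xbar ybar‖) ^ 2 := by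
          rw [← mul_pow]
          exact pow_le_pow_left₀ he0 hn1 2
    _ ≤ ((n:ℝ)⁻¹) ^ 2 * ((n:ℝ) * ∑ i, ‖g2 i (X i) (Y i) - g2 i xbar ybar‖ ^ 2) :=
          mul_le_mul_of_nonneg_left hsq (by positivity)
    _ ≤ ((n:ℝ)⁻¹) ^ 2 * ((n:ℝ) * (Lf1 ^ 2 * S)) :=
          mul_le_mul_of_nonneg_left (mul_le_mul_of_nonneg_left hsum_t hn0.le) (by positivity)
    _ = Lf1 ^ 2 / n * S := by
          field_simp
  -- Young splitting
  have ht : (0:ℝ) < β * σ / 2 := by positivity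
  have hyoung := aux_young ((ybar - ystar) - β • (G ybar - G ystar)) (β • e) ht
  rw [← hsplit] at hyoung
  have hβe : ‖β • e‖ ^ 2 = β ^ 2 * ‖e‖ ^ 2 := by
    rw [norm_smul]
    simp [mul_pow, sq_abs]
  have hc1 : (1 + β * σ / 2) * ((1 - β * σ) * a) ≤ (1 - β * σ / 2) * a := by
    nlinarith [mul_nonneg (mul_nonneg (mul_nonneg hβ0.le hσ.le) (mul_nonneg hβ0.le hσ.le)) ha0]
  have hc2 : (1 + (β * σ / 2)⁻¹) * β ^ 2 ≤ 3 * β / σ := by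
    have hexp : (1 + (β * σ / 2)⁻¹) * β ^ 2 = β ^ 2 + 2 * β / σ := by
      field_simp
    rw [hexp]
    have hββ : β ^ 2 ≤ β / σ := by
      rw [le_div_iff₀ hσ]
      nlinarith [mul_le_mul_of_nonneg_left hβσ hβ0.le]
    have : β ^ 2 + 2 * β / σ ≤ β / σ + 2 * β / σ := by linarith
    calc β ^ 2 + 2 * β / σ ≤ β / σ + 2 * β / σ := this
    _ = 3 * β / σ := by ring
  -- put everything together
  have hul : (1 + β * σ / 2) * ‖(ybar - ystar) - β • (G ybar - G ystar)‖ ^ 2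
      ≤ (1 - β * σ / 2) * a := by
    rw [hu]
    calc (1 + β * σ / 2) * (a - 2 * β * c + β ^ 2 * b)
        ≤ (1 + β * σ / 2) * ((1 - β * σ) * a) :=
          mul_le_mul_of_nonneg_left hcontr (by positivity)
    _ ≤ (1 - β * σ / 2) * a := hc1
  have her : (1 + (β * σ / 2)⁻¹) * ‖β • e‖ ^ 2
      ≤ 3 * β / σ * (Lf1 ^ 2 / n * S) := by
    rw [hβe, ← mul_assoc]
    exact mul_le_mul hc2 herr2 (by positivity) (by positivity)
  have hfin : 3 * β / σ * (Lf1 ^ 2 / n * S) = 3 * β * Lf1 ^ 2 / (n * σ) * S := by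
    field_simp
  rw [hfin] at her
  calc ‖yplus - ystar‖ ^ 2
      ≤ (1 + β * σ / 2) * ‖(ybar - ystar) - β • (G ybar - G ystar)‖ ^ 2
        + (1 + (β * σ / 2)⁻¹) * ‖β • e‖ ^ 2 := hyoung
  _ ≤ (1 - β * σ / 2) * a + 3 * β * Lf1 ^ 2 / (n * σ) * S := by linarith
  _ = (1 - β * σ / 2) * ‖ybar - ystar‖ ^ 2
        + 3 * β * Lf1 ^ 2 / (n * σ) * ∑ i, (‖xbar - X i‖ ^ 2 + ‖ybar - Y i‖ ^ 2) := by
      rw [hadef, hSdef]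
end
end

section
/- Let f : ℝ^p × ℝ^q → ℝ be such that f(x, ·) is σ-strongly convex for every x ∈ ℝ^p (σ > 0) and ∇f is L_{f,1}-Lipschitz, and let y* : ℝ^p → ℝ^q satisfy ∇₂f(x, y*(x)) = 0 for all x. Then y* is Lipschitz continuous with constant L_{f,1}/σ, i.e. ‖y*(x) − y*(x')‖ ≤ (L_{f,1}/σ)‖x − x'‖ for all x, x' ∈ ℝ^p. -/
noncomputable section

open InnerProductSpace RealInnerProductSpace

/-- Strong monotonicity of the gradient of a strongly convex function. -/
lemma grad_strong_mono {q : ℕ} (σ : ℝ) (h : Vec q → ℝ) (G : Vec q → Vec q)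
    (hG : ∀ y, HasGradientAt h (G y) y)
    (hsc : ConvexOn ℝ Set.univ (fun y : Vec q => h y - σ / 2 * ‖y‖ ^ 2))
    (a b : Vec q) :
    σ * ‖b - a‖ ^ 2 ≤ ⟪G b - G a, b - a⟫_ℝ := by
  set v := b - a with hv
  -- φ t = h (a + t • v) - σ/2 ‖a + t • v‖²
  set φ : ℝ → ℝ := fun t => h (a + t • v) - σ / 2 * ‖a + t • v‖ ^ 2 with hφ
  have hφconv : ConvexOn ℝ Set.univ φ := by
    have h0 := hsc.comp_affineMap (AffineMap.lineMap a b)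
    have heq : ∀ t : ℝ, ((fun y : Vec q => h y - σ / 2 * ‖y‖ ^ 2) ∘ (AffineMap.lineMap a b)) t = φ t := by
      intro t
      have harg : (AffineMap.lineMap a b) t = a + t • v := by
        rw [AffineMap.lineMap_apply_module, hv]; module
      simp only [Function.comp_apply, harg, φ]
    have hpre : (AffineMap.lineMap a b : ℝ →ᵃ[ℝ] Vec q) ⁻¹' Set.univ = Set.univ := by simp
    rw [hpre] at h0
    exact h0.congr (fun t _ => heq t)
  -- derivative of φ
  have hd : ∀ t : ℝ, HasDerivAt φ
      (⟪G (a + t • v), v⟫_ℝ - σ / 2 * (2 * ⟪a, v⟫_ℝ + 2 * t * ‖v‖ ^ 2)) t := by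
    intro t
    have h1 : HasDerivAt (fun t : ℝ => a + t • v) v t := by
      simpa using ((hasDerivAt_id t).smul_const v).const_add a
    have h2 : HasDerivAt (fun t : ℝ => h (a + t • v)) (⟪G (a + t • v), v⟫_ℝ) t := by
      have := ((hG (a + t • v)).hasFDerivAt).comp_hasDerivAt t h1
      exact this
    have h3 : HasDerivAt (fun t : ℝ => σ / 2 * ‖a + t • v‖ ^ 2)
        (σ / 2 * (2 * ⟪a, v⟫_ℝ + 2 * t * ‖v‖ ^ 2)) t := by
      have hexp : (fun t : ℝ => σ / 2 * ‖a + t • v‖ ^ 2)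
          = fun t : ℝ => σ / 2 * (‖a‖ ^ 2 + 2 * t * ⟪a, v⟫_ℝ + t ^ 2 * ‖v‖ ^ 2) := by
        funext t
        have : ‖a + t • v‖ ^ 2 = ‖a‖ ^ 2 + 2 * t * ⟪a, v⟫_ℝ + t ^ 2 * ‖v‖ ^ 2 := by
          rw [← real_inner_self_eq_norm_sq, ← real_inner_self_eq_norm_sq (x := a),
            ← real_inner_self_eq_norm_sq (x := v), inner_add_add_self,
            real_inner_smul_right, real_inner_smul_left, real_inner_smul_right]
          rw [real_inner_smul_left, real_inner_comm v a]
          ring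
        rw [this]
      rw [hexp]
      have : HasDerivAt (fun t : ℝ => ‖a‖ ^ 2 + 2 * t * ⟪a, v⟫_ℝ + t ^ 2 * ‖v‖ ^ 2)
          (2 * ⟪a, v⟫_ℝ + 2 * t * ‖v‖ ^ 2) t := by
        have ha : HasDerivAt (fun t : ℝ => 2 * t * ⟪a, v⟫_ℝ) (2 * ⟪a, v⟫_ℝ) t := by
          simpa using ((hasDerivAt_id t).const_mul 2).mul_const ⟪a, v⟫_ℝ
        have hb : HasDerivAt (fun t : ℝ => t ^ 2 * ‖v‖ ^ 2) (2 * t * ‖v‖ ^ 2) t := by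
          simpa [mul_comm] using ((hasDerivAt_pow 2 t).mul_const (‖v‖ ^ 2))
        exact ((ha.const_add (‖a‖ ^ 2)).add hb)
      exact this.const_mul (σ / 2)
    exact h2.sub h3
  -- slope comparison: φ'(0) ≤ slope φ 0 1 ≤ φ'(1)
  have hA := hφconv.le_slope_of_hasDerivAt (Set.mem_univ 0) (Set.mem_univ 1) one_pos (hd 0)
  have hB := hφconv.slope_le_of_hasDerivAt (Set.mem_univ 0) (Set.mem_univ 1) one_pos (hd 1)
  have hAB := hA.trans hB
  have hab : a + (1 : ℝ) • v = b := by simp [hv]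
  rw [hab] at hAB
  simp only [zero_smul, add_zero, mul_zero, mul_one] at hAB
  have : ⟪G a, v⟫_ℝ ≤ ⟪G b, v⟫_ℝ - σ * ‖v‖ ^ 2 := by nlinarith [hAB]
  have := sub_le_sub_right (sub_nonneg.mpr this) 0
  rw [inner_sub_left]
  nlinarith [this]


/-- If `f(x, ·)` is `σ`-strongly convex for every `x`, `∇f` is
`L_{f,1}`-Lipschitz and `∇₂f(x, y*(x)) = 0` for all `x`, then `y*` is
`(L_{f,1}/σ)`-Lipschitz. -/
theorem ystar_lipschitz {p q : ℕ}
    (σ Lf1 : ℝ) (hσ : 0 < σ) (hLf1 : 0 ≤ Lf1)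
    (f : Vec p → Vec q → ℝ)
    (g1 : Vec p → Vec q → Vec p) (g2 : Vec p → Vec q → Vec q)
    -- `g1, g2` are the partial gradients of `f`
    (hg1 : ∀ x y, HasGradientAt (fun x' => f x' y) (g1 x y) x)
    (hg2 : ∀ x y, HasGradientAt (fun y' => f x y') (g2 x y) y)
    -- `∇f` is `L_{f,1}`-Lipschitz (w.r.t. the Euclidean norm on the product)
    (hglip : ∀ x y x' y',
      ‖g1 x y - g1 x' y'‖ ^ 2 + ‖g2 x y - g2 x' y'‖ ^ 2
        ≤ Lf1 ^ 2 * (‖x - x'‖ ^ 2 + ‖y - y'‖ ^ 2))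
    -- `f(x, ·)` is `σ`-strongly convex for every `x`
    (hsc : ∀ x, ConvexOn ℝ Set.univ (fun y : Vec q => f x y - σ / 2 * ‖y‖ ^ 2))
    -- `y*` satisfies `∇₂f(x, y*(x)) = 0` for all `x`
    (ystar : Vec p → Vec q) (hystar : ∀ x, g2 x (ystar x) = 0) :
    ∀ x x', ‖ystar x - ystar x'‖ ≤ Lf1 / σ * ‖x - x'‖ := by
  intro x x'
  set a := ystar x' with ha
  set b := ystar x with hb
  have hmono := grad_strong_mono σ (f x) (g2 x) (hg2 x) (hsc x) a b
  have hgb : g2 x b = 0 := hystar x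
  rw [hgb] at hmono
  -- hmono : σ * ‖b - a‖ ^ 2 ≤ ⟪0 - g2 x a, b - a⟫
  have hg2a : g2 x' a = 0 := hystar x'
  have hlip : ‖g2 x a - g2 x' a‖ ≤ Lf1 * ‖x - x'‖ := by
    have hh := hglip x a x' a
    rw [sub_self, norm_zero] at hh
    have h2 : ‖g2 x a - g2 x' a‖ ^ 2 ≤ (Lf1 * ‖x - x'‖) ^ 2 := by
      nlinarith [sq_nonneg ‖g1 x a - g1 x' a‖]
    exact (pow_le_pow_iff_left₀ (norm_nonneg _) (by positivity) two_ne_zero).mp h2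
  have hinner : ⟪(0 : Vec q) - g2 x a, b - a⟫_ℝ ≤ ‖g2 x a - g2 x' a‖ * ‖b - a‖ := by
    have : (0 : Vec q) - g2 x a = g2 x' a - g2 x a := by rw [hg2a]
    rw [this]
    calc ⟪g2 x' a - g2 x a, b - a⟫_ℝ ≤ ‖g2 x' a - g2 x a‖ * ‖b - a‖ :=
          real_inner_le_norm _ _
      _ = ‖g2 x a - g2 x' a‖ * ‖b - a‖ := by rw [norm_sub_rev]
  have key : σ * ‖b - a‖ ^ 2 ≤ Lf1 * ‖x - x'‖ * ‖b - a‖ := by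
    calc σ * ‖b - a‖ ^ 2 ≤ ⟪(0 : Vec q) - g2 x a, b - a⟫_ℝ := hmono
      _ ≤ ‖g2 x a - g2 x' a‖ * ‖b - a‖ := hinner
      _ ≤ Lf1 * ‖x - x'‖ * ‖b - a‖ :=
          mul_le_mul_of_nonneg_right hlip (norm_nonneg _)
  rcases eq_or_lt_of_le (norm_nonneg (b - a)) with h0 | h0
  · rw [← h0]; positivity
  · rw [div_mul_eq_mul_div, le_div_iff₀ hσ]
    nlinarith [key]
end
end
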